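/- arXiv:1709.06336 — 5 statements merged into one kernel-verified Lean document; each statement's English description precedes it below -/
import Mathlib

section
/- Let ω be analytic on the unit disk with |ω(z)| ≤ 1 for all z, and define C_ω(z) = 1/z + λ ∫₀^z ω(t) dt for z ≠ 0 in the closed unit disk, where 0 < λ < 1. Then C_ω is injective on the closed unit disk minus the origin. -/
open Metric Complex MeasureTheory intervalIntegral Set Filter
open scoped Topology Interval

-- membership helper
lemma memball (t : ℝ) (z : ℂ) (h0 : 0 ≤ t) (h1 : t < 1) (hz : ‖z‖ ≤ 1) :
    (t:ℂ) * z ∈ ball (0:ℂ) 1 := by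
  rw [mem_ball_zero_iff, norm_mul, Complex.norm_real, Real.norm_eq_abs, _root_.abs_of_nonneg h0]
  calc t * ‖z‖ ≤ t * 1 := by nlinarith [norm_nonneg z]
  _ < 1 := by linarith

lemma memball' (t : ℝ) (z : ℂ) (h0 : 0 ≤ t) (h1 : t ≤ 1) (hz : ‖z‖ < 1) :
    (t:ℂ) * z ∈ ball (0:ℂ) 1 := by
  rw [mem_ball_zero_iff, norm_mul, Complex.norm_real, Real.norm_eq_abs, _root_.abs_of_nonneg h0]
  calc t * ‖z‖ ≤ 1 * ‖z‖ := by nlinarith [norm_nonneg z]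
  _ < 1 := by linarith

-- integrability of the integrand for z in the closed ball
lemma intgr (ω : ℂ → ℂ) (hω : DifferentiableOn ℂ ω (ball (0:ℂ) 1))
    (hbound : ∀ z ∈ ball (0:ℂ) 1, ‖ω z‖ ≤ 1) (z : ℂ) (hz : ‖z‖ ≤ 1) :
    IntervalIntegrable (fun t : ℝ => ω ((t:ℂ) * z) * z) volume 0 1 := by
  rw [intervalIntegrable_iff, uIoc_of_le zero_le_one]
  have hres : volume.restrict (Ioc (0:ℝ) 1) = volume.restrict (Ioo (0:ℝ) 1) :=
    (Measure.restrict_congr_set Ioo_ae_eq_Ioc).symm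
  have hcont : ContinuousOn (fun t : ℝ => ω ((t:ℂ) * z) * z) (Ioo (0:ℝ) 1) := by
    apply ContinuousOn.mul _ continuousOn_const
    apply hω.continuousOn.comp
    · exact (Complex.continuous_ofReal.mul continuous_const).continuousOn
    · intro t ht
      exact memball t z ht.1.le ht.2 hz
  constructor
  · rw [hres]
    exact hcont.aestronglyMeasurable measurableSet_Ioo
  · rw [hres]
    apply HasFiniteIntegral.of_bounded (C := 1)
    rw [ae_restrict_iff' measurableSet_Ioo]
    refine Eventually.of_forall fun t ht => ?_
    have h1 := hbound _ (memball t z ht.1.le ht.2 hz)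
    calc ‖ω ((t:ℂ)*z) * z‖ = ‖ω ((t:ℂ)*z)‖ * ‖z‖ := norm_mul _ _
    _ ≤ 1 := by nlinarith [norm_nonneg (ω ((t:ℂ)*z))]

lemma memball2 (t : ℝ) (z : ℂ) (h0 : 0 ≤ t) (h1 : t ≤ 1) (hz : ‖z‖ < 1) :
    (t:ℂ) * z ∈ ball (0:ℂ) 1 := by
  rw [mem_ball_zero_iff, norm_mul, Complex.norm_real, Real.norm_eq_abs, _root_.abs_of_nonneg h0]
  calc t * ‖z‖ ≤ 1 * ‖z‖ := by nlinarith [norm_nonneg z]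
  _ < 1 := by linarith

lemma inner_ftc (ω : ℂ → ℂ) (hω : DifferentiableOn ℂ ω (ball (0:ℂ) 1))
    (w : ℂ) (hw : ‖w‖ < 1) :
    ∫ t in (0:ℝ)..1, (ω ((t:ℂ)*w) + (t:ℂ)*w * deriv ω ((t:ℂ)*w)) = ω w := by
  have hd : ContinuousOn (deriv ω) (ball (0:ℂ) 1) :=
    ((hω.analyticOnNhd isOpen_ball).deriv).continuousOn
  have hmaps : ∀ t ∈ Icc (0:ℝ) 1, (t:ℂ)*w ∈ ball (0:ℂ) 1 :=
    fun t ht => memball2 t w ht.1 ht.2 hw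
  have hcim : ContinuousOn (fun t : ℝ => (t:ℂ)*w) (Icc (0:ℝ) 1) :=
    (Complex.continuous_ofReal.mul continuous_const).continuousOn
  have hder : ∀ t ∈ uIcc (0:ℝ) 1, HasDerivAt (fun t : ℝ => (t:ℂ) * ω ((t:ℂ)*w))
      (ω ((t:ℂ)*w) + (t:ℂ)*w * deriv ω ((t:ℂ)*w)) t := by
    intro t ht
    rw [uIcc_of_le zero_le_one] at ht
    have h1 : HasDerivAt (fun t : ℝ => (t:ℂ)) 1 t := by
      simpa using (hasDerivAt_id t).ofReal_comp
    have hin : HasDerivAt (fun t : ℝ => (t:ℂ)*w) w t := by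
      simpa using h1.mul_const w
    have hωat : HasDerivAt ω (deriv ω ((t:ℂ)*w)) ((t:ℂ)*w) :=
      (hω.differentiableAt (isOpen_ball.mem_nhds (hmaps t ht))).hasDerivAt
    have hcomp : HasDerivAt (fun t : ℝ => ω ((t:ℂ)*w)) (w • deriv ω ((t:ℂ)*w)) t :=
      hωat.scomp t hin
    have := h1.mul hcomp
    exact this.congr_deriv (by rw [smul_eq_mul]; ring)
  have hint : IntervalIntegrable
      (fun t : ℝ => ω ((t:ℂ)*w) + (t:ℂ)*w * deriv ω ((t:ℂ)*w)) volume 0 1 := by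
    apply ContinuousOn.intervalIntegrable
    rw [uIcc_of_le zero_le_one]
    exact (hω.continuousOn.comp hcim hmaps).add
      (hcim.mul (hd.comp hcim hmaps))
  have := integral_eq_sub_of_hasDerivAt hder hint
  rw [this]
  norm_num

lemma interior_bound (ω : ℂ → ℂ) (hω : DifferentiableOn ℂ ω (ball (0:ℂ) 1))
    (hbound : ∀ z ∈ ball (0:ℂ) 1, ‖ω z‖ ≤ 1) (z₁ z₂ : ℂ)
    (h₁ : ‖z₁‖ < 1) (h₂ : ‖z₂‖ < 1) :
    ‖(∫ t in (0:ℝ)..1, ω ((t:ℂ)*z₂) * z₂) - ∫ t in (0:ℝ)..1, ω ((t:ℂ)*z₁) * z₁‖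
      ≤ ‖z₂ - z₁‖ := by
  have hd : ContinuousOn (deriv ω) (ball (0:ℂ) 1) :=
    ((hω.analyticOnNhd isOpen_ball).deriv).continuousOn
  set c : ℝ → ℂ := fun s => z₁ + (s:ℂ) * (z₂ - z₁) with hc_def
  set r : ℝ := max ‖z₁‖ ‖z₂‖ with hr_def
  have hr0 : 0 ≤ r := le_max_of_le_left (norm_nonneg _)
  have hr1 : r < 1 := max_lt h₁ h₂
  set R : ℝ := (1 + r) / 2 with hR_def
  have hrR : r < R := by simp only [hR_def]; linarith
  have hR1 : R < 1 := by simp only [hR_def]; linarith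
  have hR0 : 0 < R := by simp only [hR_def]; linarith
  -- c s stays in the closed ball of radius r for s ∈ [0,1]
  have hcr : ∀ s ∈ Icc (0:ℝ) 1, ‖c s‖ ≤ r := by
    intro s hs
    have hrw : c s = ((1 - s : ℝ) : ℂ) * z₁ + (s:ℂ) * z₂ := by
      simp only [hc_def]; push_cast; ring
    calc ‖c s‖ ≤ ‖((1 - s : ℝ) : ℂ) * z₁‖ + ‖(s:ℂ) * z₂‖ := by
          rw [hrw]; exact norm_add_le _ _
    _ = (1 - s) * ‖z₁‖ + s * ‖z₂‖ := by
          rw [norm_mul, norm_mul, Complex.norm_real, Complex.norm_real,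
            Real.norm_eq_abs, Real.norm_eq_abs, _root_.abs_of_nonneg (by linarith [hs.2]),
            _root_.abs_of_nonneg hs.1]
    _ ≤ (1 - s) * r + s * r := by
          have := le_max_left ‖z₁‖ ‖z₂‖; have := le_max_right ‖z₁‖ ‖z₂‖
          have h1s : (0:ℝ) ≤ 1 - s := by linarith [hs.2]
          nlinarith [hs.1]
    _ = r := by ring
  set ε : ℝ := (1 - R) / (‖z₂ - z₁‖ + 1) with hε_def
  have hεpos : 0 < ε := by
    apply div_pos (by linarith) (by positivity)
  have hεb : ε * ‖z₂ - z₁‖ ≤ 1 - R := by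
    rw [hε_def, div_mul_eq_mul_div, mul_comm]
    rw [div_le_iff₀ (by positivity)]
    nlinarith [norm_nonneg (z₂ - z₁)]
  -- c x stays in closedBall 0 R for x near s ∈ [0,1]
  have hcx : ∀ s ∈ Icc (0:ℝ) 1, ∀ x ∈ ball s ε, ‖c x‖ ≤ R := by
    intro s hs x hx
    have hdiff : c x - c s = ((x - s : ℝ) : ℂ) * (z₂ - z₁) := by
      simp only [hc_def]; push_cast; ring
    have : ‖c x - c s‖ ≤ ε * ‖z₂ - z₁‖ := by
      rw [hdiff, norm_mul, Complex.norm_real, Real.norm_eq_abs]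
      have : |x - s| ≤ ε := by
        have := mem_ball_iff_norm.mp hx
        rw [Real.norm_eq_abs] at this; linarith [this]
      nlinarith [norm_nonneg (z₂ - z₁), abs_nonneg (x - s)]
    calc ‖c x‖ ≤ ‖c s‖ + ‖c x - c s‖ := by
          have := norm_add_le (c s) (c x - c s); simpa using this
    _ ≤ r + (1 - R) := add_le_add (hcr s hs) (le_trans this hεb)
    _ ≤ R := by simp only [hR_def]; linarith
  -- bound on deriv ω on closedBall 0 R
  obtain ⟨C, hC⟩ : ∃ C, ∀ w ∈ closedBall (0:ℂ) R, ‖deriv ω w‖ ≤ C :=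
    (isCompact_closedBall _ _).exists_bound_of_continuousOn
      (hd.mono (closedBall_subset_ball hR1))
  have hC0 : 0 ≤ C := le_trans (norm_nonneg _) (hC 0 (by simp [hR0.le]))
  set φ : ℝ → ℂ := fun s => ∫ t in (0:ℝ)..1, ω ((t:ℂ) * c s) * c s with hφ_def
  -- continuity helper for F x
  have hcontF : ∀ x : ℝ, ‖c x‖ < 1 →
      ContinuousOn (fun t : ℝ => ω ((t:ℂ) * c x) * c x) (Icc (0:ℝ) 1) := by
    intro x hx
    apply ContinuousOn.mul _ continuousOn_const
    apply hω.continuousOn.comp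
      ((Complex.continuous_ofReal.mul continuous_const).continuousOn)
    intro t ht
    exact memball2 t (c x) ht.1 ht.2 hx
  -- derivative of φ
  have hφder : ∀ s ∈ uIcc (0:ℝ) 1, HasDerivAt φ ((z₂ - z₁) * ω (c s)) s := by
    intro s hs
    rw [uIcc_of_le zero_le_one] at hs
    have hcs1 : ∀ x ∈ ball s ε, ‖c x‖ < 1 := fun x hx => lt_of_le_of_lt (hcx s hs x hx) hR1
    have key := hasDerivAt_integral_of_dominated_loc_of_deriv_le (μ := volume) (a := 0) (b := 1)
      (F := fun x t => ω ((t:ℂ) * c x) * c x)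
      (F' := fun x t => (z₂ - z₁) * (ω ((t:ℂ) * c x) + (t:ℂ) * c x * deriv ω ((t:ℂ) * c x)))
      (x₀ := s) (bound := fun _ => ‖z₂ - z₁‖ * (1 + C)) (ball_mem_nhds s hεpos)
      ?hFmeas ?hFint ?hF'meas ?hbnd ?bint ?hdiff
    case hFmeas =>
      filter_upwards [ball_mem_nhds s hεpos] with x hx
      rw [uIoc_of_le zero_le_one]
      exact ((hcontF x (hcs1 x hx)).mono Ioc_subset_Icc_self).aestronglyMeasurable
        measurableSet_Ioc
    case hFint =>
      apply ContinuousOn.intervalIntegrable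
      rw [uIcc_of_le zero_le_one]
      exact hcontF s (hcs1 s (mem_ball_self hεpos))
    case hF'meas =>
      rw [uIoc_of_le zero_le_one]
      have hcs : ‖c s‖ < 1 := hcs1 s (mem_ball_self hεpos)
      have hmaps : MapsTo (fun t : ℝ => (t:ℂ) * c s) (Ioc (0:ℝ) 1) (ball (0:ℂ) 1) :=
        fun t ht => memball2 t (c s) ht.1.le ht.2 hcs
      have hcim : ContinuousOn (fun t : ℝ => (t:ℂ) * c s) (Ioc (0:ℝ) 1) :=
        (Complex.continuous_ofReal.mul continuous_const).continuousOn
      exact (continuousOn_const.mul ((hω.continuousOn.comp hcim hmaps).add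
        (hcim.mul (hd.comp hcim hmaps)))).aestronglyMeasurable measurableSet_Ioc
    case hbnd =>
      refine Eventually.of_forall fun t ht x hx => ?_
      rw [uIoc_of_le zero_le_one] at ht
      have htc : ‖(t:ℂ) * c x‖ ≤ R := by
        rw [norm_mul, Complex.norm_real, Real.norm_eq_abs, _root_.abs_of_nonneg ht.1.le]
        nlinarith [hcx s hs x hx, ht.1.le, ht.2, norm_nonneg (c x)]
      have hball : (t:ℂ) * c x ∈ ball (0:ℂ) 1 :=
        mem_ball_zero_iff.mpr (lt_of_le_of_lt htc hR1)
      have hω1 : ‖ω ((t:ℂ) * c x)‖ ≤ 1 := hbound _ hball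
      have hd1 : ‖deriv ω ((t:ℂ) * c x)‖ ≤ C := hC _ (mem_closedBall_zero_iff.mpr htc)
      rw [norm_mul]
      have hR1' : R ≤ 1 := hR1.le
      calc ‖z₂ - z₁‖ * ‖ω ((t:ℂ) * c x) + (t:ℂ) * c x * deriv ω ((t:ℂ) * c x)‖
          ≤ ‖z₂ - z₁‖ * (‖ω ((t:ℂ) * c x)‖ + ‖(t:ℂ) * c x‖ * ‖deriv ω ((t:ℂ) * c x)‖) := by
            gcongr
            exact le_trans (norm_add_le _ _) (by rw [norm_mul])
      _ ≤ ‖z₂ - z₁‖ * (1 + C) := by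
            gcongr
            nlinarith [norm_nonneg ((t:ℂ) * c x), norm_nonneg (deriv ω ((t:ℂ) * c x))]
    case bint => exact intervalIntegrable_const
    case hdiff =>
      refine Eventually.of_forall fun t ht x hx => ?_
      rw [uIoc_of_le zero_le_one] at ht
      have hball : (t:ℂ) * c x ∈ ball (0:ℂ) 1 :=
        memball2 t (c x) ht.1.le ht.2 (hcs1 x hx)
      have h1 : HasDerivAt (fun x : ℝ => (x:ℂ)) 1 x := by
        simpa using (hasDerivAt_id x).ofReal_comp
      have hcder : HasDerivAt c (z₂ - z₁) x := by
        simpa [hc_def] using (h1.mul_const (z₂ - z₁)).const_add z₁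
      have hin : HasDerivAt (fun x : ℝ => (t:ℂ) * c x) ((t:ℂ) * (z₂ - z₁)) x :=
        hcder.const_mul (t:ℂ)
      have hωat : HasDerivAt ω (deriv ω ((t:ℂ) * c x)) ((t:ℂ) * c x) :=
        (hω.differentiableAt (isOpen_ball.mem_nhds hball)).hasDerivAt
      have hcomp : HasDerivAt (fun x : ℝ => ω ((t:ℂ) * c x))
          (((t:ℂ) * (z₂ - z₁)) • deriv ω ((t:ℂ) * c x)) x := hωat.scomp x hin
      have := hcomp.mul hcder
      exact this.congr_deriv (by rw [smul_eq_mul]; ring)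
    -- use the conclusion
    have hres := key.2
    have heq : (∫ t in (0:ℝ)..1,
        (z₂ - z₁) * (ω ((t:ℂ) * c s) + (t:ℂ) * c s * deriv ω ((t:ℂ) * c s)))
        = (z₂ - z₁) * ω (c s) := by
      rw [intervalIntegral.integral_const_mul, inner_ftc ω hω (c s)
        (lt_of_le_of_lt (hcr s hs) hr1)]
    rw [heq] at hres
    exact hres
  -- FTC for φ
  have hφint : IntervalIntegrable (fun s => (z₂ - z₁) * ω (c s)) volume 0 1 := by
    apply ContinuousOn.intervalIntegrable
    rw [uIcc_of_le zero_le_one]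
    apply continuousOn_const.mul
    apply hω.continuousOn.comp
    · exact (continuous_const.add (Complex.continuous_ofReal.mul continuous_const)).continuousOn
    · intro s hs
      exact mem_ball_zero_iff.mpr (lt_of_le_of_lt (hcr s hs) hr1)
  have hftc := integral_eq_sub_of_hasDerivAt hφder hφint
  have hc0 : c 0 = z₁ := by simp [hc_def]
  have hc1 : c 1 = z₂ := by simp [hc_def]
  have hφ1 : φ 1 = ∫ t in (0:ℝ)..1, ω ((t:ℂ)*z₂) * z₂ := by rw [hφ_def]; simp only [hc1]
  have hφ0 : φ 0 = ∫ t in (0:ℝ)..1, ω ((t:ℂ)*z₁) * z₁ := by rw [hφ_def]; simp only [hc0]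
  rw [← hφ1, ← hφ0, ← hftc]
  calc ‖∫ s in (0:ℝ)..1, (z₂ - z₁) * ω (c s)‖ ≤ ‖z₂ - z₁‖ * |1 - 0| := by
        apply intervalIntegral.norm_integral_le_of_norm_le_const
        intro s hs
        rw [uIoc_of_le zero_le_one] at hs
        have : ‖ω (c s)‖ ≤ 1 := hbound _
          (mem_ball_zero_iff.mpr (lt_of_le_of_lt (hcr s (Ioc_subset_Icc_self hs)) hr1))
        rw [norm_mul]
        nlinarith [norm_nonneg (z₂ - z₁)]
  _ = ‖z₂ - z₁‖ := by norm_num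

lemma tendG (ω : ℂ → ℂ) (hω : DifferentiableOn ℂ ω (ball (0:ℂ) 1))
    (hbound : ∀ z ∈ ball (0:ℂ) 1, ‖ω z‖ ≤ 1) (z : ℂ) (hz : ‖z‖ ≤ 1) :
    Tendsto (fun r : ℝ => ∫ t in (0:ℝ)..1, ω ((t:ℂ) * ((r:ℂ)*z)) * ((r:ℂ)*z))
      (𝓝[<] (1:ℝ)) (𝓝 (∫ t in (0:ℝ)..1, ω ((t:ℂ)*z) * z)) := by
  have hIoo : Ioo (0:ℝ) 1 ∈ 𝓝[<] (1:ℝ) :=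
    Ioo_mem_nhdsLT_of_mem (by constructor <;> norm_num)
  have hrz1 : ∀ r ∈ Ioo (0:ℝ) 1, ‖(r:ℂ)*z‖ < 1 := by
    intro r hr
    rw [norm_mul, Complex.norm_real, Real.norm_eq_abs, _root_.abs_of_nonneg hr.1.le]
    nlinarith [norm_nonneg z, hr.1, hr.2]
  apply intervalIntegral.tendsto_integral_filter_of_dominated_convergence (bound := fun _ => 1)
  · filter_upwards [hIoo] with r hr
    rw [uIoc_of_le zero_le_one]
    have : ContinuousOn (fun t : ℝ => ω ((t:ℂ) * ((r:ℂ)*z)) * ((r:ℂ)*z)) (Ioc (0:ℝ) 1) := by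
      apply ContinuousOn.mul _ continuousOn_const
      apply hω.continuousOn.comp
        ((Complex.continuous_ofReal.mul continuous_const).continuousOn)
      intro t ht
      exact memball2 t _ ht.1.le ht.2 (hrz1 r hr)
    exact this.aestronglyMeasurable measurableSet_Ioc
  · filter_upwards [hIoo] with r hr
    refine Eventually.of_forall fun t ht => ?_
    rw [uIoc_of_le zero_le_one] at ht
    have hball := memball2 t _ ht.1.le ht.2 (hrz1 r hr)
    have h1 := hbound _ hball
    rw [norm_mul]
    nlinarith [norm_nonneg (ω ((t:ℂ) * ((r:ℂ)*z))), (hrz1 r hr), norm_nonneg ((r:ℂ)*z)]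
  · exact intervalIntegrable_const
  · have hne : ∀ᵐ t : ℝ ∂volume, t ≠ (1:ℝ) := by
      rw [ae_iff]
      simp only [not_not, setOf_eq_eq_singleton]
      exact Real.volume_singleton
    filter_upwards [hne] with t ht1 ht
    rw [uIoc_of_le zero_le_one] at ht
    have htlt : t < 1 := lt_of_le_of_ne ht.2 ht1
    have hball : (t:ℂ)*z ∈ ball (0:ℂ) 1 := memball t z ht.1.le htlt hz
    have hr : Tendsto (fun r : ℝ => (r:ℂ)*z) (𝓝[<] (1:ℝ)) (𝓝 z) := by
      have : Tendsto (fun r : ℝ => (r:ℂ)) (𝓝[<] (1:ℝ)) (𝓝 1) :=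
        (Complex.continuous_ofReal.tendsto 1).mono_left nhdsWithin_le_nhds
      simpa using this.mul_const z
    have htz : Tendsto (fun r : ℝ => (t:ℂ)*((r:ℂ)*z)) (𝓝[<] (1:ℝ)) (𝓝 ((t:ℂ)*z)) :=
      hr.const_mul _
    have hωc : ContinuousAt ω ((t:ℂ)*z) :=
      (hω.continuousOn.continuousAt (isOpen_ball.mem_nhds hball))
    exact (hωc.tendsto.comp htz).mul hr

lemma closed_bound (ω : ℂ → ℂ) (hω : DifferentiableOn ℂ ω (ball (0:ℂ) 1))
    (hbound : ∀ z ∈ ball (0:ℂ) 1, ‖ω z‖ ≤ 1) (z₁ z₂ : ℂ)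
    (h₁ : ‖z₁‖ ≤ 1) (h₂ : ‖z₂‖ ≤ 1) :
    ‖(∫ t in (0:ℝ)..1, ω ((t:ℂ)*z₂) * z₂) - ∫ t in (0:ℝ)..1, ω ((t:ℂ)*z₁) * z₁‖
      ≤ ‖z₂ - z₁‖ := by
  have hIoo : Ioo (0:ℝ) 1 ∈ 𝓝[<] (1:ℝ) :=
    Ioo_mem_nhdsLT_of_mem (by constructor <;> norm_num)
  have ht := ((tendG ω hω hbound z₂ h₂).sub (tendG ω hω hbound z₁ h₁)).norm
  refine le_of_tendsto ht ?_
  filter_upwards [hIoo] with r hr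
  have h1 : ‖(r:ℂ)*z₁‖ < 1 := by
    rw [norm_mul, Complex.norm_real, Real.norm_eq_abs, _root_.abs_of_nonneg hr.1.le]
    nlinarith [norm_nonneg z₁, hr.1, hr.2]
  have h2 : ‖(r:ℂ)*z₂‖ < 1 := by
    rw [norm_mul, Complex.norm_real, Real.norm_eq_abs, _root_.abs_of_nonneg hr.1.le]
    nlinarith [norm_nonneg z₂, hr.1, hr.2]
  calc ‖(∫ t in (0:ℝ)..1, ω ((t:ℂ) * ((r:ℂ)*z₂)) * ((r:ℂ)*z₂))
      - ∫ t in (0:ℝ)..1, ω ((t:ℂ) * ((r:ℂ)*z₁)) * ((r:ℂ)*z₁)‖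
      ≤ ‖(r:ℂ)*z₂ - (r:ℂ)*z₁‖ := interior_bound ω hω hbound _ _ h1 h2
  _ = |r| * ‖z₂ - z₁‖ := by
      rw [← mul_sub, norm_mul, Complex.norm_real, Real.norm_eq_abs]
  _ ≤ ‖z₂ - z₁‖ := by
      rw [_root_.abs_of_nonneg hr.1.le]
      nlinarith [norm_nonneg (z₂ - z₁), hr.2]

theorem stmt_9 (lam : ℝ) (hlam : 0 < lam) (hlam1 : lam < 1)
    (ω : ℂ → ℂ)
    (hω : DifferentiableOn ℂ ω (ball (0:ℂ) 1))
    (hbound : ∀ z ∈ ball (0:ℂ) 1, ‖ω z‖ ≤ 1) :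
    Set.InjOn (fun z => 1 / z + (lam:ℂ) * ∫ t in (0:ℝ)..1, ω ((t:ℂ) * z) * z)
      (closedBall (0:ℂ) 1 \ {0}) := by
  intro z₁ hz₁ z₂ hz₂ heq
  by_contra hne
  obtain ⟨hz₁b, hz₁0⟩ := hz₁
  obtain ⟨hz₂b, hz₂0⟩ := hz₂
  rw [mem_closedBall_zero_iff] at hz₁b hz₂b
  rw [mem_singleton_iff] at hz₁0 hz₂0
  simp only at heq
  set G₁ : ℂ := ∫ t in (0:ℝ)..1, ω ((t:ℂ) * z₁) * z₁ with hG₁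
  set G₂ : ℂ := ∫ t in (0:ℝ)..1, ω ((t:ℂ) * z₂) * z₂ with hG₂
  have key : z₂ - z₁ = (lam:ℂ) * (G₂ - G₁) * (z₁ * z₂) := by
    have h := heq
    field_simp at h
    linear_combination h
  have hGle : ‖G₂ - G₁‖ ≤ ‖z₂ - z₁‖ := closed_bound ω hω hbound z₁ z₂ hz₁b hz₂b
  have hpos : 0 < ‖z₂ - z₁‖ := by
    rw [norm_pos_iff, sub_ne_zero]
    exact fun h => hne h.symm
  have hnorm : ‖z₂ - z₁‖ = lam * ‖G₂ - G₁‖ * (‖z₁‖ * ‖z₂‖) := by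
    rw [key, norm_mul, norm_mul, norm_mul, Complex.norm_real, Real.norm_eq_abs,
      _root_.abs_of_pos hlam]
  have hab : ‖z₁‖ * ‖z₂‖ ≤ 1 := mul_le_one₀ hz₁b (norm_nonneg z₂) hz₂b
  have h1 : lam * ‖G₂ - G₁‖ * (‖z₁‖ * ‖z₂‖) ≤ lam * ‖z₂ - z₁‖ := by
    nlinarith [norm_nonneg (G₂ - G₁), mul_nonneg hlam.le (norm_nonneg (G₂ - G₁)),
      mul_nonneg (norm_nonneg z₁) (norm_nonneg z₂)]
  nlinarith [mul_pos (show (0:ℝ) < 1 - lam by linarith) hpos]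
end

section
/- Fix 0 < λ < 1 and a ∈ (0,1). Let ω(z) = (z + a)/(1 + az) and v(a) = ∫₀¹ ω(t) dt. Then the function G(z) = 1 − z − λ z ∫_z^1 ω(t) dt has no zeros in the open unit disk. -/
open Metric Complex

theorem stmt_10 (lam a : ℝ) (hlam : 0 < lam) (hlam1 : lam < 1)
    (ha : 0 < a) (ha1 : a < 1)
    (ω : ℂ → ℂ) (hω : ∀ z, ω z = (z + (a:ℂ)) / (1 + (a:ℂ) * z)) :
    ∀ z ∈ ball (0:ℂ) 1,
      1 - z - (lam:ℂ) * z * (∫ t in (0:ℝ)..1, ω (z + (t:ℂ) * (1 - z)) * (1 - z)) ≠ 0 := by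
  intro z hz hG
  rw [mem_ball, dist_zero_right] at hz
  have hz1 : z ≠ 1 := by
    intro h; rw [h] at hz; simp at hz
  have hne : (0:ℝ) < ‖(1:ℂ) - z‖ := by
    rw [norm_pos_iff]
    intro h
    exact hz1 (by linear_combination -h)
  -- bound on ω on the closed unit disk
  have hωb : ∀ w : ℂ, ‖w‖ ≤ 1 → ‖ω w‖ ≤ 1 := by
    intro w hw
    have hd : (1:ℝ) - a ≤ ‖1 + (a:ℂ) * w‖ := by
      have h1 := norm_add_le (1 + (a:ℂ) * w) (-((a:ℂ) * w))
      simp only [add_neg_cancel_right, norm_one, norm_neg, norm_mul] at h1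
      have haw : ‖(a:ℂ)‖ * ‖w‖ ≤ a := by
        rw [Complex.norm_real, Real.norm_eq_abs, abs_of_pos ha]
        nlinarith
      linarith
    have hdpos : (0:ℝ) < ‖1 + (a:ℂ) * w‖ := by linarith
    have hsq : ‖w + (a:ℂ)‖ ^ 2 ≤ ‖1 + (a:ℂ) * w‖ ^ 2 := by
      have e1 : ‖w + (a:ℂ)‖ ^ 2 = (w.re + a) ^ 2 + w.im ^ 2 := by
        rw [Complex.sq_norm, Complex.normSq_apply]
        simp
        ring
      have e2 : ‖1 + (a:ℂ) * w‖ ^ 2 = (1 + a * w.re) ^ 2 + (a * w.im) ^ 2 := by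
        rw [Complex.sq_norm, Complex.normSq_apply]
        simp
        ring
      have hw2 : w.re ^ 2 + w.im ^ 2 ≤ 1 := by
        have : ‖w‖ ^ 2 ≤ 1 := by nlinarith [norm_nonneg w]
        rw [Complex.sq_norm, Complex.normSq_apply] at this
        nlinarith
      rw [e1, e2]
      nlinarith [mul_nonneg (show (0:ℝ) ≤ 1 - a^2 by nlinarith)
        (show (0:ℝ) ≤ 1 - (w.re^2 + w.im^2) by linarith)]
    have hle : ‖w + (a:ℂ)‖ ≤ ‖1 + (a:ℂ) * w‖ := by
      nlinarith [norm_nonneg (w + (a:ℂ)), norm_nonneg (1 + (a:ℂ) * w)]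
    rw [hω, norm_div]
    rw [div_le_one hdpos]
    exact hle
  -- bound on the integral
  have hIb : ‖∫ t in (0:ℝ)..1, ω (z + (t:ℂ) * (1 - z)) * (1 - z)‖ ≤ ‖(1:ℂ) - z‖ := by
    have h := intervalIntegral.norm_integral_le_of_norm_le_const
      (C := ‖(1:ℂ) - z‖) (a := (0:ℝ)) (b := 1)
      (f := fun t : ℝ => ω (z + (t:ℂ) * (1 - z)) * (1 - z)) ?_
    · simpa using h
    · intro t ht
      rw [Set.uIoc_of_le (by norm_num : (0:ℝ) ≤ 1)] at ht
      obtain ⟨ht0, ht1⟩ := ht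
      have hwle : ‖z + (t:ℂ) * (1 - z)‖ ≤ 1 := by
        have he : z + (t:ℂ) * (1 - z) = ((1 - t : ℝ) : ℂ) * z + ((t : ℝ) : ℂ) := by
          push_cast; ring
        rw [he]
        calc ‖((1 - t : ℝ) : ℂ) * z + ((t : ℝ) : ℂ)‖
            ≤ ‖((1 - t : ℝ) : ℂ) * z‖ + ‖((t : ℝ) : ℂ)‖ := norm_add_le _ _
          _ = (1 - t) * ‖z‖ + t := by
              have h1 : ‖((1 - t : ℝ) : ℂ)‖ = 1 - t := by
                rw [Complex.norm_real, Real.norm_eq_abs,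
                  _root_.abs_of_nonneg (show (0:ℝ) ≤ 1 - t by linarith)]
              have h2 : ‖((t : ℝ) : ℂ)‖ = t := by
                rw [Complex.norm_real, Real.norm_eq_abs, _root_.abs_of_nonneg ht0.le]
              rw [norm_mul, h1, h2]
          _ ≤ 1 := by nlinarith [norm_nonneg z]
      rw [norm_mul]
      have := hωb _ hwle
      nlinarith [norm_nonneg (ω (z + (t:ℂ) * (1 - z)))]
  -- derive contradiction
  set I := ∫ t in (0:ℝ)..1, ω (z + (t:ℂ) * (1 - z)) * (1 - z) with hI
  have heq : (1:ℂ) - z = (lam:ℂ) * z * I := by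
    linear_combination hG
  have hnorm : ‖(1:ℂ) - z‖ = lam * ‖z‖ * ‖I‖ := by
    rw [heq, norm_mul, norm_mul, Complex.norm_real, Real.norm_eq_abs, abs_of_pos hlam]
  have h1 : lam * ‖z‖ * ‖I‖ ≤ lam * ‖z‖ * ‖(1:ℂ) - z‖ :=
    mul_le_mul_of_nonneg_left hIb (by positivity)
  have h2 : (0:ℝ) < (1 - lam * ‖z‖) * ‖(1:ℂ) - z‖ :=
    mul_pos (by nlinarith [norm_nonneg z]) hne
  nlinarith
end

section
/- Let 0 < λ < 1, let ω be analytic on 𝔻 with |ω(z)| ≤ 1 and ω(0) = a, |a| < 1, and suppose a₂ ∈ ℂ satisfies |a₂| > 1 + λ v(|a|), where v(x) = ∫₀¹ (x+t)/(1+xt) dt. Then the map F(z) = (1/a₂)[1 + λ z ∫₀^z ω(t) dt] has a fixed point in the open unit disk; consequently 1 − a₂ z + λ z ∫₀^z ω(t) dt vanishes somewhere in 𝔻. -/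
open Metric Complex Set

/-- Monotonicity of `s ↦ (x+s)/(1+x*s)` for `0 ≤ x ≤ 1`. -/
lemma moebius_mono {x s₁ s₂ : ℝ} (hx0 : 0 ≤ x) (hx1 : x ≤ 1) (h1 : 0 ≤ s₁) (h12 : s₁ ≤ s₂) :
    (x + s₁) / (1 + x * s₁) ≤ (x + s₂) / (1 + x * s₂) := by
  rw [div_le_div_iff₀ (by nlinarith) (by nlinarith)]
  nlinarith [mul_nonneg (sub_nonneg.2 h12) (by nlinarith : (0:ℝ) ≤ 1 - x ^ 2)]

/-- Strict maximum principle: a nonconstant-capable bound upgrade. -/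
lemma strict_bound {ω : ℂ → ℂ} {a : ℂ} (hω : DifferentiableOn ℂ ω (ball (0:ℂ) 1))
    (hbound : ∀ z ∈ ball (0:ℂ) 1, ‖ω z‖ ≤ 1) (h0 : ω 0 = a) (ha : ‖a‖ < 1) :
    ∀ z ∈ ball (0:ℂ) 1, ‖ω z‖ < 1 := by
  intro z hz
  rcases lt_or_eq_of_le (hbound z hz) with h | h
  · exact h
  · exfalso
    have hm : IsMaxOn (norm ∘ ω) (ball (0:ℂ) 1) z := by
      intro w hw
      simp only [Function.comp_apply, mem_setOf_eq]
      rw [h]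
      exact hbound w hw
    have heq := Complex.eqOn_of_isPreconnected_of_isMaxOn_norm
      (convex_ball (0:ℂ) 1).isPreconnected isOpen_ball hω hz hm
      (mem_ball_self (by norm_num : (0:ℝ) < 1))
    have : ω 0 = ω z := heq
    rw [h0] at this
    rw [← this] at h
    exact absurd h (ne_of_lt ha)

/-- Schwarz–Pick at the origin. -/
lemma schwarz_pick {ω : ℂ → ℂ} {a : ℂ} (hω : DifferentiableOn ℂ ω (ball (0:ℂ) 1))
    (hbound : ∀ z ∈ ball (0:ℂ) 1, ‖ω z‖ ≤ 1) (h0 : ω 0 = a) (ha : ‖a‖ < 1) :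
    ∀ z ∈ ball (0:ℂ) 1, ‖ω z‖ ≤ (‖a‖ + ‖z‖) / (1 + ‖a‖ * ‖z‖) := by
  have hlt := strict_bound hω hbound h0 ha
  set c := (starRingEnd ℂ) a with hc
  have hden : ∀ w : ℂ, ‖w‖ < 1 → 1 - c * w ≠ 0 := by
    intro w hw h
    rw [sub_eq_zero] at h
    have h1 : ‖c * w‖ = 1 := by rw [← h]; simp
    rw [norm_mul, hc, RCLike.norm_conj] at h1
    nlinarith [norm_nonneg a, norm_nonneg w]
  -- norm-squared comparison
  have e2 : ∀ w : ℂ, normSq (1 - c * w) = 1 + normSq a * normSq w - 2 * (w * (starRingEnd ℂ) a).re := by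
    intro w
    have : (1 * (starRingEnd ℂ) (c * w)).re = (w * (starRingEnd ℂ) a).re := by
      simp [hc, Complex.mul_re, Complex.conj_re, Complex.conj_im]
      ring
    rw [Complex.normSq_sub, this, Complex.normSq_one, Complex.normSq_mul, hc,
      Complex.normSq_conj]
  have key : ∀ w : ℂ, ‖w‖ < 1 → ‖w - a‖ < ‖1 - c * w‖ := by
    intro w hw
    have e1 := Complex.normSq_sub w a
    have e2' := e2 w
    have hna : normSq a = ‖a‖ ^ 2 := by rw [Complex.normSq_eq_norm_sq]
    have hnw : normSq w = ‖w‖ ^ 2 := by rw [Complex.normSq_eq_norm_sq]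
    have hlt2 : normSq (w - a) < normSq (1 - c * w) := by
      rw [e1, e2', hna, hnw]
      have hp : (0:ℝ) < (1 - ‖a‖ ^ 2) * (1 - ‖w‖ ^ 2) :=
        mul_pos (by nlinarith [norm_nonneg a]) (by nlinarith [norm_nonneg w])
      nlinarith [hp]
    have h1 : ‖w - a‖ ^ 2 < ‖1 - c * w‖ ^ 2 := by
      rw [Complex.sq_norm, Complex.sq_norm]
      exact hlt2
    nlinarith [norm_nonneg (w - a), norm_nonneg (1 - c * w)]
  set f : ℂ → ℂ := fun z => (ω z - a) / (1 - c * ω z) with hf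
  have hfd : DifferentiableOn ℂ f (ball (0:ℂ) 1) := by
    apply DifferentiableOn.div (hω.sub_const a)
    · exact (differentiableOn_const 1).sub ((differentiableOn_const c).mul hω)
    · exact fun z hz => hden _ (hlt z hz)
  have hmaps : MapsTo f (ball (0:ℂ) 1) (ball (0:ℂ) 1) := by
    intro z hz
    rw [mem_ball_zero_iff, hf]
    simp only
    rw [norm_div, div_lt_one]
    · exact key _ (hlt z hz)
    · exact lt_of_le_of_lt (norm_nonneg _) (key _ (hlt z hz))
  have hf0 : f 0 = 0 := by simp [hf, h0]
  intro z hz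
  have hschwarz := Complex.norm_le_norm_of_mapsTo_ball hfd (hmaps.mono_right ball_subset_closedBall) hf0
    (by rwa [← mem_ball_zero_iff])
  -- ‖ω z - a‖ ≤ ‖z‖ * ‖1 - c * ω z‖
  have hdenpos : 0 < ‖1 - c * ω z‖ := lt_of_le_of_lt (norm_nonneg _) (key _ (hlt z hz))
  have hineq : ‖ω z - a‖ ≤ ‖z‖ * ‖1 - c * ω z‖ := by
    have : ‖f z‖ ≤ ‖z‖ := by
      exact hschwarz
    rw [hf] at this
    simp only at this
    rw [norm_div, div_le_iff₀ hdenpos] at this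
    exact this
  set m := ‖ω z‖ with hm
  set x := ‖a‖ with hx
  set s := ‖z‖ with hs
  set u := (ω z * (starRingEnd ℂ) a).re with hu
  have hxm : u ≤ x * m := by
    calc u ≤ ‖ω z * (starRingEnd ℂ) a‖ := Complex.re_le_norm _
    _ = m * x := by
        rw [norm_mul, RCLike.norm_conj,
          ← hm, ← hx]
    _ = x * m := mul_comm _ _
  have hsq : m ^ 2 + x ^ 2 - 2 * u ≤ s ^ 2 * (1 + x ^ 2 * m ^ 2 - 2 * u) := by
    have h2 : ‖ω z - a‖ ^ 2 ≤ (‖z‖ * ‖1 - c * ω z‖) ^ 2 := by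
      nlinarith [norm_nonneg (ω z - a), hineq]
    have e1 := Complex.normSq_sub (ω z) a
    have e2' := e2 (ω z)
    have hna : normSq a = x ^ 2 := by
      rw [hx, Complex.normSq_eq_norm_sq]
    have hnw : normSq (ω z) = m ^ 2 := by
      rw [hm, Complex.normSq_eq_norm_sq]
    have hd1 : ‖ω z - a‖ ^ 2 = m ^ 2 + x ^ 2 - 2 * u := by
      rw [Complex.sq_norm, e1, hna, hnw, hu]
    have hd2 : ‖1 - c * ω z‖ ^ 2 = 1 + x ^ 2 * m ^ 2 - 2 * u := by
      rw [Complex.sq_norm, e2', hna, hnw, hu]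
    rw [hd1] at h2
    calc m ^ 2 + x ^ 2 - 2 * u ≤ (‖z‖ * ‖1 - c * ω z‖) ^ 2 := h2
    _ = s ^ 2 * (1 + x ^ 2 * m ^ 2 - 2 * u) := by rw [mul_pow, hd2, hs]
  have hm1 : m < 1 := hlt z hz
  have hx1 : x < 1 := ha
  have hs1 : s < 1 := by rwa [hs, ← mem_ball_zero_iff]
  have hm0 : 0 ≤ m := norm_nonneg _
  have hx0 : 0 ≤ x := norm_nonneg _
  have hs0 : 0 ≤ s := norm_nonneg _
  rw [le_div_iff₀ (by nlinarith)]
  have hAB : (m * (1 + x * s) - (x + s)) * (m * (1 - x * s) - (x - s)) ≤ 0 := by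
    nlinarith [hsq, mul_nonneg (sub_nonneg.2 hxm) (by nlinarith : (0:ℝ) ≤ 1 - s ^ 2)]
  nlinarith [hAB, mul_nonneg hs0 (by nlinarith : (0:ℝ) ≤ 1 - x * m)]
open Metric Complex Set MeasureTheory intervalIntegral

lemma g_hasDerivAt {ω : ℂ → ℂ} (hω : DifferentiableOn ℂ ω (ball (0:ℂ) 1))
    (hbound : ∀ z ∈ ball (0:ℂ) 1, ‖ω z‖ ≤ 1) {z₀ : ℂ} (hz₀ : z₀ ∈ ball (0:ℂ) 1) :
    HasDerivAt (fun z : ℂ => ∫ t in (0:ℝ)..1, ω ((t:ℂ) * z) * z) (ω z₀) z₀ := by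
  have hz1 : ‖z₀‖ < 1 := mem_ball_zero_iff.1 hz₀
  set ρ : ℝ := (1 + ‖z₀‖) / 2 with hρdef
  have hρ1 : ρ < 1 := by rw [hρdef]; linarith
  have hρ0 : ‖z₀‖ < ρ := by rw [hρdef]; linarith
  have hρpos : 0 < ρ := lt_of_le_of_lt (norm_nonneg z₀) hρ0
  have hεpos : 0 < ρ - ‖z₀‖ := by linarith
  have h1ρ : 0 < 1 - ρ := by linarith
  have hωat : ∀ w : ℂ, ‖w‖ < 1 → HasDerivAt ω (deriv ω w) w := fun w hw =>
    (hω.differentiableAt (isOpen_ball.mem_nhds (mem_ball_zero_iff.2 hw))).hasDerivAt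
  have hdb : ∀ w : ℂ, ‖w‖ < ρ → ‖deriv ω w‖ ≤ 3 / (1 - ρ) := by
    intro w hw
    have hsub : ball w (1 - ρ) ⊆ ball (0:ℂ) 1 := by
      intro ζ hζ
      rw [mem_ball] at hζ ⊢
      calc dist ζ 0 ≤ dist ζ w + dist w 0 := dist_triangle _ _ _
      _ < (1 - ρ) + ρ := by
          rw [dist_zero_right]; exact add_lt_add hζ hw
      _ = 1 := by ring
    apply Complex.norm_deriv_le_div_of_mapsTo_ball (hω.mono hsub) ?_ h1ρ
    intro ζ hζ
    rw [mem_closedBall]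
    refine le_of_lt ?_
    have h1 : ‖ω ζ‖ ≤ 1 := hbound ζ (hsub hζ)
    have h2 : ‖ω w‖ ≤ 1 := hbound w (mem_ball_zero_iff.2 (lt_trans hw hρ1))
    calc dist (ω ζ) (ω w) ≤ ‖ω ζ‖ + ‖ω w‖ := by
          rw [dist_eq_norm]; exact norm_sub_le _ _
    _ ≤ 2 := by linarith
    _ < 3 := by norm_num
  have hmem : ∀ z : ℂ, z ∈ ball z₀ (ρ - ‖z₀‖) → ‖z‖ < ρ := by
    intro z hz
    rw [mem_ball] at hz
    calc ‖z‖ = dist z 0 := (dist_zero_right z).symm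
    _ ≤ dist z z₀ + dist z₀ 0 := dist_triangle _ _ _
    _ < (ρ - ‖z₀‖) + ‖z₀‖ := by rw [dist_zero_right]; exact add_lt_add_of_lt_of_le hz le_rfl
    _ = ρ := by ring
  have htz : ∀ (t : ℝ), |t| ≤ 1 → ∀ z : ℂ, ‖z‖ < ρ → ‖(t:ℂ) * z‖ < ρ := by
    intro t ht z hz
    rw [norm_mul, Complex.norm_real, Real.norm_eq_abs]
    calc |t| * ‖z‖ ≤ 1 * ‖z‖ := by
          exact mul_le_mul_of_nonneg_right ht (norm_nonneg z)
    _ = ‖z‖ := one_mul _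
    _ < ρ := hz
  have hωc : ContinuousOn ω (ball (0:ℂ) 1) := hω.continuousOn
  have hdc : ContinuousOn (deriv ω) (ball (0:ℂ) 1) :=
    ((hω.analyticOnNhd isOpen_ball).deriv).continuousOn
  -- continuity of the integrand in t, for fixed z with ‖z‖ < 1
  have hmapsto : ∀ z : ℂ, ‖z‖ < 1 → MapsTo (fun t : ℝ => (t:ℂ) * z) (Set.uIcc (0:ℝ) 1)
      (ball (0:ℂ) 1) := by
    intro z hz t ht
    rw [Set.uIcc_of_le (zero_le_one), Set.mem_Icc] at ht
    rw [mem_ball_zero_iff, norm_mul, Complex.norm_real, Real.norm_eq_abs, _root_.abs_of_nonneg ht.1]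
    calc t * ‖z‖ ≤ 1 * ‖z‖ := mul_le_mul_of_nonneg_right ht.2 (norm_nonneg z)
    _ = ‖z‖ := one_mul _
    _ < 1 := hz
  have hcont_t : Continuous (fun t : ℝ => ((t:ℂ) * z₀ : ℂ)) := by continuity
  have hcontOn : ∀ z : ℂ, ‖z‖ < 1 →
      ContinuousOn (fun t : ℝ => ω ((t:ℂ) * z) * z) (Set.uIcc (0:ℝ) 1) := by
    intro z hz
    exact ((hωc.comp ((Complex.continuous_ofReal.mul continuous_const).continuousOn)
      (hmapsto z hz)).mul continuousOn_const)
  set F' : ℂ → ℝ → ℂ := fun z t => deriv ω ((t:ℂ) * z) * (t:ℂ) * z + ω ((t:ℂ) * z) with hF'def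
  have hF'contOn : ContinuousOn (F' z₀) (Set.uIcc (0:ℝ) 1) := by
    apply ContinuousOn.add
    · exact ((hdc.comp ((Complex.continuous_ofReal.mul continuous_const).continuousOn)
        (hmapsto z₀ hz1)).mul (Complex.continuous_ofReal.continuousOn)).mul continuousOn_const
    · exact hωc.comp ((Complex.continuous_ofReal.mul continuous_const).continuousOn)
        (hmapsto z₀ hz1)
  have huIoc : Set.uIoc (0:ℝ) 1 = Set.Ioc (0:ℝ) 1 := Set.uIoc_of_le zero_le_one
  have huIoc_sub : Set.uIoc (0:ℝ) 1 ⊆ Set.uIcc (0:ℝ) 1 := Set.uIoc_subset_uIcc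
  have hderiv_z : ∀ (t : ℝ), |t| ≤ 1 → ∀ z : ℂ, ‖z‖ < ρ →
      HasDerivAt (fun z : ℂ => ω ((t:ℂ) * z) * z) (F' z t) z := by
    intro t ht z hz
    have h1 : HasDerivAt (fun z : ℂ => ω ((t:ℂ) * z)) (deriv ω ((t:ℂ) * z) * ((t:ℂ) * 1)) z :=
      (hωat _ (lt_trans (htz t ht z hz) hρ1)).comp z ((hasDerivAt_id z).const_mul (t:ℂ))
    have h2 := h1.mul (hasDerivAt_id z)
    convert h2 using 1
    · rfl
    · rfl
    · rfl
    rw [hF'def]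
    simp only [id_eq]
    ring
  obtain ⟨hint, hder⟩ := intervalIntegral.hasDerivAt_integral_of_dominated_loc_of_deriv_le
    (F := fun z (t : ℝ) => ω ((t:ℂ) * z) * z) (F' := F') (x₀ := z₀) (a := 0) (b := 1)
    (μ := volume) (bound := fun _ => 3 / (1 - ρ) + 1) (ball_mem_nhds z₀ hεpos)
    (by
      filter_upwards [ball_mem_nhds z₀ hεpos] with z hz
      exact ((hcontOn z (lt_trans (hmem z hz) hρ1)).mono huIoc_sub).aestronglyMeasurable
        measurableSet_uIoc)
    ((hcontOn z₀ hz1).intervalIntegrable)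
    ((hF'contOn.mono huIoc_sub).aestronglyMeasurable measurableSet_uIoc)
    (by
      apply ae_of_all
      intro t ht z hz
      rw [huIoc, Set.mem_Ioc] at ht
      have ht1 : |t| ≤ 1 := by rw [_root_.abs_of_pos ht.1]; exact ht.2
      have hzρ : ‖z‖ < ρ := hmem z hz
      have h1 : ‖deriv ω ((t:ℂ) * z)‖ ≤ 3 / (1 - ρ) := hdb _ (htz t ht1 z hzρ)
      have h2 : ‖ω ((t:ℂ) * z)‖ ≤ 1 :=
        hbound _ (mem_ball_zero_iff.2 (lt_trans (htz t ht1 z hzρ) hρ1))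
      rw [hF'def]
      calc ‖deriv ω ((t:ℂ) * z) * (t:ℂ) * z + ω ((t:ℂ) * z)‖
          ≤ ‖deriv ω ((t:ℂ) * z) * (t:ℂ) * z‖ + ‖ω ((t:ℂ) * z)‖ := norm_add_le _ _
      _ = ‖deriv ω ((t:ℂ) * z)‖ * ‖(t:ℂ)‖ * ‖z‖ + ‖ω ((t:ℂ) * z)‖ := by
          rw [norm_mul, norm_mul]
      _ ≤ 3 / (1 - ρ) * 1 * 1 + 1 := by
          have hd0 : 0 ≤ ‖deriv ω ((t:ℂ) * z)‖ := norm_nonneg _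
          have htn : ‖(t:ℂ)‖ ≤ 1 := by rwa [Complex.norm_real, Real.norm_eq_abs]
          have hzn : ‖z‖ ≤ 1 := le_of_lt (lt_trans hzρ hρ1)
          have h3 : (0:ℝ) ≤ 3 / (1 - ρ) := by positivity
          gcongr
      _ = 3 / (1 - ρ) + 1 := by ring)
    intervalIntegrable_const
    (by
      apply ae_of_all
      intro t ht z hz
      rw [huIoc, Set.mem_Ioc] at ht
      have ht1 : |t| ≤ 1 := by rw [_root_.abs_of_pos ht.1]; exact ht.2
      exact hderiv_z t ht1 z (hmem z hz))
  -- identify the integral of F' with ω z₀, via FTC in t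
  have hFTC : (∫ t in (0:ℝ)..1, F' z₀ t) = ω z₀ := by
    have key : ∀ t ∈ Set.uIcc (0:ℝ) 1,
        HasDerivAt (fun s : ℝ => (s:ℂ) * ω ((s:ℂ) * z₀)) (F' z₀ t) t := by
      intro t ht
      rw [Set.uIcc_of_le (zero_le_one), Set.mem_Icc] at ht
      have ht1 : |t| ≤ 1 := by rw [_root_.abs_of_nonneg ht.1]; exact ht.2
      have htz1 : ‖(t:ℂ) * z₀‖ < 1 := by
        rw [norm_mul, Complex.norm_real, Real.norm_eq_abs]
        calc |t| * ‖z₀‖ ≤ 1 * ‖z₀‖ := mul_le_mul_of_nonneg_right ht1 (norm_nonneg z₀)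
        _ = ‖z₀‖ := one_mul _
        _ < 1 := hz1
      have hin : HasDerivAt (fun s : ℂ => s * z₀) (1 * z₀) (t:ℂ) :=
        (hasDerivAt_id ((t:ℂ))).mul_const z₀
      have houter : HasDerivAt (fun s : ℂ => ω (s * z₀)) (deriv ω ((t:ℂ) * z₀) * (1 * z₀))
          (t:ℂ) := (hωat _ htz1).comp ((t:ℝ):ℂ) hin
      have hψ : HasDerivAt (fun s : ℂ => s * ω (s * z₀))
          (1 * ω ((t:ℂ) * z₀) + (t:ℂ) * (deriv ω ((t:ℂ) * z₀) * (1 * z₀))) (t:ℂ) :=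
        (hasDerivAt_id ((t:ℂ))).mul houter
      have := hψ.comp_ofReal
      convert this using 1
      rw [hF'def]
      ring
    have := intervalIntegral.integral_eq_sub_of_hasDerivAt key hint
    rw [this]
    norm_num
  rw [hFTC] at hder
  exact hder

lemma mapsto_aux {z : ℂ} (hz : ‖z‖ < 1) :
    Set.MapsTo (fun t : ℝ => (t:ℂ) * z) (Set.uIcc (0:ℝ) 1) (ball (0:ℂ) 1) := by
  intro t ht
  rw [Set.uIcc_of_le (zero_le_one), Set.mem_Icc] at ht
  rw [mem_ball_zero_iff, norm_mul, Complex.norm_real, Real.norm_eq_abs,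
    _root_.abs_of_nonneg ht.1]
  calc t * ‖z‖ ≤ 1 * ‖z‖ := mul_le_mul_of_nonneg_right ht.2 (norm_nonneg z)
  _ = ‖z‖ := one_mul _
  _ < 1 := hz

theorem stmt_11 (lam : ℝ) (hlam : 0 < lam) (hlam1 : lam < 1)
    (ω : ℂ → ℂ) (a : ℂ)
    (hω : DifferentiableOn ℂ ω (ball (0:ℂ) 1))
    (hbound : ∀ z ∈ ball (0:ℂ) 1, ‖ω z‖ ≤ 1)
    (h0 : ω 0 = a) (ha : ‖a‖ < 1)
    (a₂ : ℂ)
    (ha₂ : 1 + lam * (∫ t in (0:ℝ)..1, (‖a‖ + t) / (1 + ‖a‖ * t)) < ‖a₂‖) :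
    ∃ z₀ ∈ ball (0:ℂ) 1,
      (1 / a₂) * (1 + (lam:ℂ) * z₀ * ∫ t in (0:ℝ)..1, ω ((t:ℂ) * z₀) * z₀) = z₀ ∧
      1 - a₂ * z₀ + (lam:ℂ) * z₀ * (∫ t in (0:ℝ)..1, ω ((t:ℂ) * z₀) * z₀) = 0 := by
  have hx0 : (0:ℝ) ≤ ‖a‖ := norm_nonneg a
  set v : ℝ := ∫ t in (0:ℝ)..1, (‖a‖ + t) / (1 + ‖a‖ * t) with hvdef
  have hbc : ContinuousOn (fun t : ℝ => (‖a‖ + t) / (1 + ‖a‖ * t)) (Set.uIcc (0:ℝ) 1) := by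
    apply ContinuousOn.div
    · exact (continuous_const.add continuous_id).continuousOn
    · exact (continuous_const.add (continuous_const.mul continuous_id)).continuousOn
    · intro t ht
      rw [Set.uIcc_of_le (zero_le_one), Set.mem_Icc] at ht
      have : (0:ℝ) < 1 + ‖a‖ * t := by nlinarith [ht.1]
      exact ne_of_gt this
  have hv_int : IntervalIntegrable (fun t : ℝ => (‖a‖ + t) / (1 + ‖a‖ * t)) MeasureTheory.volume 0 1 :=
    hbc.intervalIntegrable
  have hv0 : 0 ≤ v := by
    rw [hvdef]
    apply intervalIntegral.integral_nonneg zero_le_one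
    intro t ht
    have ht0 := ht.1
    have : (0:ℝ) < 1 + ‖a‖ * t := by nlinarith
    positivity
  have ha₂1 : 1 < ‖a₂‖ := by nlinarith
  have ha₂0 : (0:ℝ) < ‖a₂‖ := by linarith
  have ha₂ne : a₂ ≠ 0 := by
    intro h; rw [h, norm_zero] at ha₂0; exact lt_irrefl _ ha₂0
  set r : ℝ := (1 + lam * v) / ‖a₂‖ with hrdef
  have hr0 : 0 < r := div_pos (by nlinarith) ha₂0
  have hr1 : r < 1 := (div_lt_one ha₂0).2 ha₂
  set g : ℂ → ℂ := fun z => ∫ t in (0:ℝ)..1, ω ((t:ℂ) * z) * z with hgdef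
  have hSP := schwarz_pick hω hbound h0 ha
  have hg_bound : ∀ z : ℂ, ‖z‖ ≤ r → ‖g z‖ ≤ v := by
    intro z hz
    have hz1 : ‖z‖ < 1 := lt_of_le_of_lt hz hr1
    have hcont : ContinuousOn (fun t : ℝ => ω ((t:ℂ) * z)) (Set.uIcc (0:ℝ) 1) :=
      hω.continuousOn.comp ((Complex.continuous_ofReal.mul continuous_const).continuousOn)
        (mapsto_aux hz1)
    have hnint : IntervalIntegrable (fun t : ℝ => ‖ω ((t:ℂ) * z)‖) MeasureTheory.volume 0 1 :=
      hcont.norm.intervalIntegrable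
    have hnorm1 : ‖∫ t in (0:ℝ)..1, ω ((t:ℂ) * z)‖ ≤ v := by
      calc ‖∫ t in (0:ℝ)..1, ω ((t:ℂ) * z)‖ ≤ ∫ t in (0:ℝ)..1, ‖ω ((t:ℂ) * z)‖ :=
        intervalIntegral.norm_integral_le_integral_norm zero_le_one
      _ ≤ v := by
        rw [hvdef]
        apply intervalIntegral.integral_mono_on zero_le_one hnint hv_int
        intro t ht
        have htu : t ∈ Set.uIcc (0:ℝ) 1 := by
          rw [Set.uIcc_of_le (zero_le_one)]; exact ht
        have h1 := hSP _ (mapsto_aux hz1 htu)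
        have h2 : ‖(t:ℂ) * z‖ ≤ t := by
          rw [norm_mul, Complex.norm_real, Real.norm_eq_abs, _root_.abs_of_nonneg ht.1]
          calc t * ‖z‖ ≤ t * 1 := mul_le_mul_of_nonneg_left (le_of_lt hz1) ht.1
          _ = t := mul_one t
        exact le_trans h1 (moebius_mono hx0 (le_of_lt ha) (norm_nonneg _) h2)
    have hgz : g z = (∫ t in (0:ℝ)..1, ω ((t:ℂ) * z)) * z := by
      rw [hgdef]
      exact intervalIntegral.integral_mul_const z (fun t : ℝ => ω ((t:ℂ) * z))
    rw [hgz, norm_mul]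
    calc ‖∫ t in (0:ℝ)..1, ω ((t:ℂ) * z)‖ * ‖z‖ ≤ v * 1 :=
      mul_le_mul hnorm1 (le_of_lt hz1) (norm_nonneg z) hv0
    _ = v := mul_one v
  have hsubball : closedBall (0:ℂ) r ⊆ ball (0:ℂ) 1 := by
    intro z hz
    rw [mem_closedBall_zero_iff] at hz
    exact mem_ball_zero_iff.2 (lt_of_le_of_lt hz hr1)
  have hglip : ∀ z₁ ∈ closedBall (0:ℂ) r, ∀ z₂ ∈ closedBall (0:ℂ) r,
      ‖g z₁ - g z₂‖ ≤ ‖z₁ - z₂‖ := by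
    intro z₁ h1 z₂ h2
    have key := (convex_closedBall (0:ℂ) r).norm_image_sub_le_of_norm_hasDerivWithin_le
      (f := g) (f' := ω) (C := 1)
      (fun z hzb => (g_hasDerivAt hω hbound (hsubball hzb)).hasDerivWithinAt)
      (fun z hzb => hbound z (hsubball hzb)) h2 h1
    simpa using key
  set F : ℂ → ℂ := fun z => (1 / a₂) * (1 + (lam:ℂ) * z * g z) with hFdef
  have hlamnorm : ‖((lam:ℝ):ℂ)‖ = lam := by
    rw [Complex.norm_real, Real.norm_eq_abs, _root_.abs_of_pos hlam]
  have hFmaps : Set.MapsTo F (closedBall (0:ℂ) r) (closedBall (0:ℂ) r) := by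
    intro z hz
    rw [mem_closedBall_zero_iff] at hz ⊢
    have hgz := hg_bound z hz
    have hnum : ‖1 + (lam:ℂ) * z * g z‖ ≤ 1 + lam * v := by
      calc ‖1 + (lam:ℂ) * z * g z‖ ≤ ‖(1:ℂ)‖ + ‖(lam:ℂ) * z * g z‖ := norm_add_le _ _
      _ = 1 + lam * ‖z‖ * ‖g z‖ := by rw [norm_one, norm_mul, norm_mul, hlamnorm]
      _ ≤ 1 + lam * 1 * v := by
          have h1 : lam * ‖z‖ * ‖g z‖ ≤ lam * 1 * v := by
            apply mul_le_mul _ hgz (norm_nonneg _) (by positivity)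
            exact mul_le_mul_of_nonneg_left (le_of_lt (lt_of_le_of_lt hz hr1)) (le_of_lt hlam)
          linarith
      _ = 1 + lam * v := by ring
    calc ‖F z‖ = ‖1 + (lam:ℂ) * z * g z‖ / ‖a₂‖ := by
          rw [hFdef]; rw [norm_mul, norm_div, norm_one]; ring
    _ ≤ (1 + lam * v) / ‖a₂‖ := by gcongr
    _ = r := hrdef.symm
  have hKcoe : lam * (v + r) / ‖a₂‖ < 1 := by
    rw [div_lt_one ha₂0]
    have : lam * r < 1 := by nlinarith
    nlinarith
  set K : NNReal := ⟨lam * (v + r) / ‖a₂‖, by positivity⟩ with hKdef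
  have hK1 : K < 1 := by
    rw [← NNReal.coe_lt_coe]
    exact hKcoe
  have hlip : LipschitzOnWith K F (closedBall (0:ℂ) r) := by
    apply LipschitzOnWith.of_dist_le_mul
    intro z₁ h1 z₂ h2
    rw [dist_eq_norm, dist_eq_norm]
    have hz₁ : ‖z₁‖ ≤ r := mem_closedBall_zero_iff.1 h1
    have hz₂ : ‖z₂‖ ≤ r := mem_closedBall_zero_iff.1 h2
    have key : ‖z₁ * g z₁ - z₂ * g z₂‖ ≤ (v + r) * ‖z₁ - z₂‖ := by
      have hsplit : z₁ * g z₁ - z₂ * g z₂ = (z₁ - z₂) * g z₁ + z₂ * (g z₁ - g z₂) := by ring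
      calc ‖z₁ * g z₁ - z₂ * g z₂‖ = ‖(z₁ - z₂) * g z₁ + z₂ * (g z₁ - g z₂)‖ := by rw [hsplit]
      _ ≤ ‖(z₁ - z₂) * g z₁‖ + ‖z₂ * (g z₁ - g z₂)‖ := norm_add_le _ _
      _ = ‖z₁ - z₂‖ * ‖g z₁‖ + ‖z₂‖ * ‖g z₁ - g z₂‖ := by rw [norm_mul, norm_mul]
      _ ≤ ‖z₁ - z₂‖ * v + r * ‖z₁ - z₂‖ := by
          apply add_le_add
          · exact mul_le_mul_of_nonneg_left (hg_bound z₁ hz₁) (norm_nonneg _)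
          · exact mul_le_mul hz₂ (hglip z₁ h1 z₂ h2) (norm_nonneg _) (le_of_lt hr0)
      _ = (v + r) * ‖z₁ - z₂‖ := by ring
    have hdiff : F z₁ - F z₂ = (1 / a₂) * (lam:ℂ) * (z₁ * g z₁ - z₂ * g z₂) := by
      rw [hFdef]; ring
    calc ‖F z₁ - F z₂‖ = lam / ‖a₂‖ * ‖z₁ * g z₁ - z₂ * g z₂‖ := by
          rw [hdiff, norm_mul, norm_mul, norm_div, norm_one, hlamnorm]; ring
    _ ≤ lam / ‖a₂‖ * ((v + r) * ‖z₁ - z₂‖) := by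
        apply mul_le_mul_of_nonneg_left key (by positivity)
    _ = (lam * (v + r) / ‖a₂‖) * ‖z₁ - z₂‖ := by ring
    _ = (K : ℝ) * ‖z₁ - z₂‖ := by rw [hKdef]; rfl
  have hcontr : ContractingWith K (hFmaps.restrict F _ _) :=
    ⟨hK1, hlip.mapsToRestrict hFmaps⟩
  obtain ⟨y, hy_mem, hy_fix, -⟩ := hcontr.exists_fixedPoint'
    (isClosed_closedBall.isComplete) hFmaps (mem_closedBall_self (le_of_lt hr0)) (edist_ne_top _ _)
  have hy1 : y ∈ ball (0:ℂ) 1 := hsubball hy_mem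
  have hfix : (1 / a₂) * (1 + (lam:ℂ) * y * g y) = y := hy_fix
  refine ⟨y, hy1, hfix, ?_⟩
  have hfix2 : (1 / a₂) * (1 + (lam:ℂ) * y * ∫ t in (0:ℝ)..1, ω ((t:ℂ) * y) * y) = y := hfix
  rw [div_mul_eq_mul_div, one_mul, div_eq_iff ha₂ne] at hfix2
  rw [intervalIntegral.integral_mul_const] at hfix2 ⊢
  linear_combination hfix2
end

section
/- Let 0 < λ < 1 and let f ∈ U(λ) have the form f(z) = z/(1 − a₂ z + λ z ∫₀^z ω(t) dt), where ω is analytic on 𝔻 with |ω(z)| ≤ 1 and ω(0) = a, |a| < 1. Then |a₂| ≤ 1 + λ v(|a|), where v(x) = ∫₀¹ (x+t)/(1+xt) dt. -/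
open Metric Complex MeasureTheory

lemma nsq (x : ℂ) : ‖x‖^2 = x.re^2 + x.im^2 := by
  rw [Complex.sq_norm, Complex.normSq_apply]; ring

lemma mob_id (u v : ℂ) : ‖1 - (starRingEnd ℂ) u * v‖^2 - ‖u - v‖^2
    = (1 - ‖u‖^2) * (1 - ‖v‖^2) := by
  simp only [nsq, Complex.sub_re, Complex.sub_im, Complex.mul_re, Complex.mul_im,
    Complex.one_re, Complex.one_im, Complex.conj_re, Complex.conj_im]
  ring

-- Schwarz lemma with ≤ bound
lemma schwarz_le {g : ℂ → ℂ} (hd : DifferentiableOn ℂ g (ball 0 1))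
    (hb : ∀ z ∈ ball (0:ℂ) 1, ‖g z‖ ≤ 1) (h0 : g 0 = 0) {z : ℂ} (hz : z ∈ ball (0:ℂ) 1) :
    ‖g z‖ ≤ ‖z‖ := by
  have hds : ‖dslope g 0 z‖ ≤ 1 := by
    have h : ∀ ε > (0:ℝ), ‖dslope g 0 z‖ ≤ 1 + ε := by
      intro ε hε
      have := Complex.norm_dslope_le_div_of_mapsTo_ball (R₁ := 1) (R₂ := 1 + ε) hd
        (fun w hw => by
          simp only [mem_closedBall, h0, dist_eq_norm, sub_zero]
          exact le_trans (hb w hw) (by linarith)) hz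
      simpa using this
    exact le_of_forall_pos_le_add h
  rcases eq_or_ne z 0 with rfl | hz0
  · simp [h0]
  · have : dslope g 0 z = z⁻¹ * (g z) := by
      rw [dslope_of_ne _ (by exact hz0), slope_def_field, h0]
      field_simp
      ring
    rw [this, norm_mul, norm_inv] at hds
    have hzpos : (0:ℝ) < ‖z‖ := norm_pos_iff.mpr hz0
    have : ‖g z‖ = ‖z‖ * (‖z‖⁻¹ * ‖g z‖) := by
      rw [← mul_assoc, mul_inv_cancel₀ hzpos.ne', one_mul]
    rw [this]
    calc ‖z‖ * (‖z‖⁻¹ * ‖g z‖) ≤ ‖z‖ * 1 := mul_le_mul_of_nonneg_left hds (le_of_lt hzpos)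
    _ = ‖z‖ := by ring

-- Möbius denominator is nonzero and dominates, for ‖p‖ < 1, ‖z‖ ≤ 1
lemma mob_den_pos {p z : ℂ} (hp : ‖p‖ < 1) (hz : ‖z‖ ≤ 1) :
    (0:ℝ) < ‖1 - (starRingEnd ℂ) p * z‖ := by
  have : ‖(starRingEnd ℂ) p * z‖ < 1 := by
    rw [norm_mul, RCLike.norm_conj]
    calc ‖p‖ * ‖z‖ ≤ ‖p‖ * 1 := mul_le_mul_of_nonneg_left hz (norm_nonneg _)
    _ < 1 := by simpa using hp
  calc (0:ℝ) < 1 - ‖(starRingEnd ℂ) p * z‖ := by linarith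
  _ ≤ ‖1 - (starRingEnd ℂ) p * z‖ := by
      have := norm_sub_norm_le (1 : ℂ) ((starRingEnd ℂ) p * z)
      simpa using this

lemma mob_le {p z : ℂ} (hp : ‖p‖ < 1) (hz : ‖z‖ ≤ 1) :
    ‖p - z‖ ≤ ‖1 - (starRingEnd ℂ) p * z‖ := by
  have h := mob_id p z
  have h1 : (0:ℝ) ≤ (1 - ‖p‖^2) * (1 - ‖z‖^2) := by
    apply mul_nonneg <;> nlinarith [norm_nonneg p, norm_nonneg z]
  nlinarith [norm_nonneg (p - z), norm_nonneg (1 - (starRingEnd ℂ) p * z)]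

lemma mob_lt {p z : ℂ} (hp : ‖p‖ < 1) (hz : ‖z‖ < 1) :
    ‖p - z‖ < ‖1 - (starRingEnd ℂ) p * z‖ := by
  have h := mob_id p z
  have h1 : (0:ℝ) < (1 - ‖p‖^2) * (1 - ‖z‖^2) := by
    apply mul_pos <;> nlinarith [norm_nonneg p, norm_nonneg z]
  nlinarith [norm_nonneg (p - z), norm_nonneg (1 - (starRingEnd ℂ) p * z)]

/-- Schwarz–Pick inequality for self-maps of the closed unit disk. -/
lemma schwarz_pick_s12 {ψ : ℂ → ℂ} (hd : DifferentiableOn ℂ ψ (ball 0 1))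
    (hb : ∀ z ∈ ball (0:ℂ) 1, ‖ψ z‖ ≤ 1) {u v : ℂ}
    (hu : u ∈ ball (0:ℂ) 1) (hv : v ∈ ball (0:ℂ) 1) :
    ‖ψ u - ψ v‖ * ‖1 - (starRingEnd ℂ) u * v‖
      ≤ ‖1 - (starRingEnd ℂ) (ψ u) * ψ v‖ * ‖u - v‖ := by
  rw [mem_ball, dist_zero_right] at hu hv
  rcases lt_or_eq_of_le (hb u (by simpa [mem_ball, dist_zero_right] using hu)) with hbu | hbu
  case inr =>
    -- ‖ψ u‖ = 1 : maximum modulus, ψ constant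
    have hmax : IsMaxOn (norm ∘ ψ) (ball 0 1) u := by
      intro w hw
      simp only [Function.comp_apply, Set.mem_setOf_eq, hbu]
      exact hb w hw
    have hconst := Complex.eqOn_of_isPreconnected_of_isMaxOn_norm
      (convex_ball (0:ℂ) 1).isPreconnected isOpen_ball hd
      (by simpa [mem_ball, dist_zero_right] using hu) hmax
    have : ψ v = ψ u := hconst (by simpa [mem_ball, dist_zero_right] using hv)
    rw [this]
    simp only [sub_self, norm_zero, zero_mul]
    positivity
  case inl =>
    set b := ψ u with hbdef
    set φ : ℂ → ℂ := fun z => (u - z) / (1 - (starRingEnd ℂ) u * z) with hφ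
    set σ : ℂ → ℂ := fun w => (b - w) / (1 - (starRingEnd ℂ) b * w) with hσ
    have hu1 : ‖u‖ < 1 := hu
    -- φ maps ball to ball
    have hφmap : ∀ z : ℂ, ‖z‖ < 1 → ‖φ z‖ < 1 := by
      intro z hz
      rw [hφ]
      simp only [norm_div]
      rw [div_lt_one (mob_den_pos hu1 hz.le)]
      exact mob_lt hu1 hz
    have hφdiff : DifferentiableOn ℂ φ (ball 0 1) := by
      apply DifferentiableOn.div (by fun_prop) (by fun_prop)
      intro z hz
      rw [mem_ball, dist_zero_right] at hz
      exact norm_pos_iff.mp (mob_den_pos hu1 hz.le)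
    have hden1 : (1 - (starRingEnd ℂ) u * v) ≠ 0 := norm_pos_iff.mp (mob_den_pos hu1 hv.le)
    have hdenu : (1 - (starRingEnd ℂ) u * u) ≠ 0 := norm_pos_iff.mp (mob_den_pos hu1 hu1.le)
    have hφv : ‖φ v‖ < 1 := hφmap v hv
    have hdenu' : (1:ℂ) - u * (starRingEnd ℂ) u ≠ 0 := by rwa [mul_comm] at hdenu
    have hφφ : φ (φ v) = v := by
      rw [hφ]
      show (u - ((u - v) / (1 - (starRingEnd ℂ) u * v))) /
        (1 - (starRingEnd ℂ) u * ((u - v) / (1 - (starRingEnd ℂ) u * v))) = v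
      have h2 : 1 - (starRingEnd ℂ) u * ((u - v) / (1 - (starRingEnd ℂ) u * v))
          = (1 - (starRingEnd ℂ) u * u) / (1 - (starRingEnd ℂ) u * v) := by
        field_simp
        ring
      rw [h2, div_eq_iff (div_ne_zero hdenu hden1)]
      rw [mul_div_assoc', eq_div_iff hden1, sub_mul, div_mul_cancel₀ _ hden1]
      ring
    have hψφ : DifferentiableOn ℂ (fun z => ψ (φ z)) (ball 0 1) := by
      apply hd.comp hφdiff
      intro z hz
      rw [mem_ball, dist_zero_right] at hz ⊢
      exact hφmap z hz
    have hψφb : ∀ z ∈ ball (0:ℂ) 1, ‖ψ (φ z)‖ ≤ 1 := by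
      intro z hz
      rw [mem_ball, dist_zero_right] at hz
      exact hb _ (by rw [mem_ball, dist_zero_right]; exact hφmap z hz)
    set g : ℂ → ℂ := fun z => σ (ψ (φ z)) with hg
    have hgdiff : DifferentiableOn ℂ g (ball 0 1) := by
      rw [hg, hσ]
      apply DifferentiableOn.div
      · exact (differentiableOn_const b).sub hψφ
      · exact (differentiableOn_const 1).sub ((differentiableOn_const _).mul hψφ)
      · intro z hz
        exact norm_pos_iff.mp (mob_den_pos hbu (hψφb z hz))
    have hgb : ∀ z ∈ ball (0:ℂ) 1, ‖g z‖ ≤ 1 := by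
      intro z hz
      rw [hg, hσ]
      simp only [norm_div]
      rw [div_le_one (mob_den_pos hbu (hψφb z hz))]
      exact mob_le hbu (hψφb z hz)
    have hg0 : g 0 = 0 := by
      have hφ0 : φ 0 = u := by rw [hφ]; simp
      show σ (ψ (φ 0)) = 0
      rw [hφ0, ← hbdef, hσ]
      simp
    have key := schwarz_le hgdiff hgb hg0 (z := φ v)
      (by rw [mem_ball, dist_zero_right]; exact hφv)
    have key' : ‖σ (ψ (φ (φ v)))‖ ≤ ‖φ v‖ := key
    rw [hφφ, hσ, hφ] at key'
    simp only [norm_div] at key'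
    rw [div_le_div_iff₀ (mob_den_pos hbu (hb v (by rw [mem_ball, dist_zero_right]; exact hv)))
      (mob_den_pos hu1 hv.le)] at key'
    calc ‖ψ u - ψ v‖ * ‖1 - (starRingEnd ℂ) u * v‖
        = ‖b - ψ v‖ * ‖1 - (starRingEnd ℂ) u * v‖ := by rw [hbdef]
      _ ≤ ‖u - v‖ * ‖1 - (starRingEnd ℂ) b * ψ v‖ := key'
      _ = ‖1 - (starRingEnd ℂ) (ψ u) * ψ v‖ * ‖u - v‖ := by rw [hbdef]; ring

lemma key4 {k : ℝ} (hk0 : 0 < k) (hk1 : k ≤ 1) {w : ℂ} (hw : ‖w‖ ≤ k^2) :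
    (1 + k^2) * ‖((k^2 : ℝ) : ℂ) - w‖ ≤ 2 * k^2 * ‖1 - w‖ := by
  set s := w.re
  have hm : s^2 + w.im^2 ≤ k^4 := by
    have h1 : ‖w‖^2 ≤ (k^2)^2 := by
      apply pow_le_pow_left₀ (norm_nonneg _) hw
    rw [nsq] at h1
    nlinarith
  have hA : ‖((k^2 : ℝ) : ℂ) - w‖^2 = (k^2 - s)^2 + w.im^2 := by
    rw [nsq]
    simp only [Complex.sub_re, Complex.sub_im, Complex.ofReal_re, Complex.ofReal_im]
    ring
  have hB : ‖(1:ℂ) - w‖^2 = (1 - s)^2 + w.im^2 := by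
    rw [nsq]
    simp only [Complex.sub_re, Complex.sub_im, Complex.one_re, Complex.one_im]
    ring
  have hsq : ((1 + k^2) * ‖((k^2 : ℝ) : ℂ) - w‖)^2 ≤ (2 * k^2 * ‖1 - w‖)^2 := by
    have expand : ((1 + k^2) * ‖((k^2 : ℝ) : ℂ) - w‖)^2
        = (1 + k^2)^2 * ((k^2 - s)^2 + w.im^2) := by rw [mul_pow, hA]
    have expand2 : (2 * k^2 * ‖(1:ℂ) - w‖)^2 = 4 * k^4 * ((1 - s)^2 + w.im^2) := by
      rw [mul_pow, hB]; ring
    rw [expand, expand2]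
    nlinarith [sq_nonneg (k^2 + s), sq_nonneg (1 - k^2), sq_nonneg k, sq_nonneg w.im,
      mul_nonneg (sq_nonneg (1 - k^2)) (add_nonneg (sq_nonneg (k^2 + s)) (sq_nonneg w.im)),
      mul_nonneg (mul_nonneg (sub_nonneg.mpr hk1) (by positivity : (0:ℝ) ≤ 1 + k))
        (sub_nonneg.mpr hm)]
  have h1 : (0:ℝ) ≤ (1 + k^2) * ‖((k^2 : ℝ) : ℂ) - w‖ := by positivity
  have h2 : (0:ℝ) ≤ 2 * k^2 * ‖(1:ℂ) - w‖ := by positivity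
  nlinarith [hsq, h1, h2]

lemma contract {ψ : ℂ → ℂ} {k : ℝ} (hk0 : 0 < k) (hk1 : k < 1)
    (hd : DifferentiableOn ℂ ψ (ball 0 1)) (hb : ∀ z ∈ ball (0:ℂ) 1, ‖ψ z‖ ≤ k)
    {u v : ℂ} (hu : u ∈ ball (0:ℂ) 1) (hv : v ∈ ball (0:ℂ) 1) :
    (1 + k^2) * (‖ψ u - ψ v‖ * ‖1 - (starRingEnd ℂ) u * v‖)
      ≤ (2 * k) * (‖1 - (starRingEnd ℂ) (ψ u) * ψ v‖ * ‖u - v‖) := by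
  set χ : ℂ → ℂ := fun z => ψ z / (k:ℂ) with hχ
  have hkc : ((k:ℂ)) ≠ 0 := by exact_mod_cast hk0.ne'
  have hχd : DifferentiableOn ℂ χ (ball 0 1) := hd.div_const _
  have hχb : ∀ z ∈ ball (0:ℂ) 1, ‖χ z‖ ≤ 1 := by
    intro z hz
    rw [hχ]
    simp only [norm_div, Complex.norm_real, Real.norm_eq_abs, abs_of_pos hk0]
    rw [div_le_one hk0]
    exact hb z hz
  have SP := schwarz_pick_s12 hχd hχb hu hv
  have e1 : χ u - χ v = (ψ u - ψ v) / (k:ℂ) := by rw [hχ]; ring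
  have e2 : (1:ℂ) - (starRingEnd ℂ) (χ u) * χ v
      = (((k^2 : ℝ) : ℂ) - (starRingEnd ℂ) (ψ u) * ψ v) / ((k^2 : ℝ) : ℂ) := by
    rw [hχ]
    simp only [map_div₀, Complex.conj_ofReal]
    push_cast
    field_simp
  rw [e1, e2] at SP
  simp only [norm_div, Complex.norm_real, Real.norm_eq_abs, abs_of_pos hk0,
    abs_of_pos (by positivity : (0:ℝ) < k^2)] at SP
  rw [div_mul_eq_mul_div, div_mul_eq_mul_div,
    div_le_div_iff₀ (by positivity) (by positivity)] at SP
  -- SP : ‖ψ u - ψ v‖ * ‖1 - conj u * v‖ * k^2 ≤ ‖k^2 - conj(ψu) ψv‖ * ‖u - v‖ * k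
  have hw : ‖(starRingEnd ℂ) (ψ u) * ψ v‖ ≤ k^2 := by
    rw [norm_mul, RCLike.norm_conj]
    calc ‖ψ u‖ * ‖ψ v‖ ≤ k * k :=
      mul_le_mul (hb u hu) (hb v hv) (norm_nonneg _) hk0.le
    _ = k^2 := by ring
  have K4 := key4 hk0 hk1.le hw
  have SP3 : ‖ψ u - ψ v‖ * ‖1 - (starRingEnd ℂ) u * v‖ * k
      ≤ ‖((k^2 : ℝ) : ℂ) - (starRingEnd ℂ) (ψ u) * ψ v‖ * ‖u - v‖ := by
    apply le_of_mul_le_mul_right _ hk0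
    calc ‖ψ u - ψ v‖ * ‖1 - (starRingEnd ℂ) u * v‖ * k * k
        = ‖ψ u - ψ v‖ * ‖1 - (starRingEnd ℂ) u * v‖ * k ^ 2 := by ring
      _ ≤ ‖((k^2 : ℝ) : ℂ) - (starRingEnd ℂ) (ψ u) * ψ v‖ * ‖u - v‖ * k := SP
  apply le_of_mul_le_mul_right _ hk0
  calc (1 + k^2) * (‖ψ u - ψ v‖ * ‖1 - (starRingEnd ℂ) u * v‖) * k
      = (1 + k^2) * (‖ψ u - ψ v‖ * ‖1 - (starRingEnd ℂ) u * v‖ * k) := by ring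
    _ ≤ (1 + k^2) * (‖((k^2 : ℝ) : ℂ) - (starRingEnd ℂ) (ψ u) * ψ v‖ * ‖u - v‖) :=
        mul_le_mul_of_nonneg_left SP3 (by positivity)
    _ = ((1 + k^2) * ‖((k^2 : ℝ) : ℂ) - (starRingEnd ℂ) (ψ u) * ψ v‖) * ‖u - v‖ := by ring
    _ ≤ (2 * k^2 * ‖1 - (starRingEnd ℂ) (ψ u) * ψ v‖) * ‖u - v‖ :=
        mul_le_mul_of_nonneg_right K4 (norm_nonneg _)
    _ = 2 * k * (‖1 - (starRingEnd ℂ) (ψ u) * ψ v‖ * ‖u - v‖) * k := by ring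

lemma fixed_point {ψ : ℂ → ℂ} {k : ℝ} (hk0 : 0 ≤ k) (hk1 : k < 1)
    (hd : DifferentiableOn ℂ ψ (ball 0 1)) (hb : ∀ z ∈ ball (0:ℂ) 1, ‖ψ z‖ ≤ k) :
    ∃ z ∈ ball (0:ℂ) 1, ψ z = z := by
  rcases eq_or_lt_of_le hk0 with hk | hk
  · refine ⟨0, by simp, ?_⟩
    have := hb 0 (by simp)
    rw [← hk] at this
    simpa using norm_le_zero_iff.mp this
  -- iterate
  set z : ℕ → ℂ := fun n => ψ^[n] 0 with hz
  have hz0 : z 0 = 0 := rfl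
  have hzs : ∀ n, z (n + 1) = ψ (z n) := by
    intro n; rw [hz]; simp [Function.iterate_succ_apply']
  have hmem : ∀ n, z n ∈ ball (0:ℂ) 1 := by
    intro n
    induction n with
    | zero => simp [hz0]
    | succ m ih =>
      rw [hzs m, mem_ball, dist_zero_right]
      exact lt_of_le_of_lt (hb _ ih) hk1
  set q : ℝ := 2 * k / (1 + k^2) with hq
  have hk2pos : (0:ℝ) < 1 + k^2 := by positivity
  have hq0 : 0 ≤ q := by positivity
  have hq1 : q < 1 := by
    rw [hq, div_lt_one hk2pos]
    nlinarith [sq_nonneg (1 - k)]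
  set ρ : ℕ → ℝ := fun n =>
    ‖z (n+1) - z n‖ / ‖1 - (starRingEnd ℂ) (z (n+1)) * z n‖ with hρ
  have hnorm1 : ∀ n, ‖z n‖ < 1 := by
    intro n; have := hmem n; rwa [mem_ball, dist_zero_right] at this
  have hdenpos : ∀ n, (0:ℝ) < ‖1 - (starRingEnd ℂ) (z (n+1)) * z n‖ :=
    fun n => mob_den_pos (hnorm1 (n+1)) (hnorm1 n).le
  have hcontr : ∀ n, ρ (n+1) ≤ q * ρ n := by
    intro n
    have C := contract hk hk1 hd hb (hmem (n+1)) (hmem n)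
    rw [← hzs (n+1), ← hzs n] at C
    simp only [hρ, hq]
    rw [div_mul_div_comm, div_le_div_iff₀ (hdenpos (n+1)) (mul_pos hk2pos (hdenpos n))]
    calc ‖z (n+1+1) - z (n+1)‖ * ((1 + k^2) * ‖1 - (starRingEnd ℂ) (z (n+1)) * z n‖)
        = (1 + k^2) * (‖z (n+1+1) - z (n+1)‖ * ‖1 - (starRingEnd ℂ) (z (n+1)) * z n‖) := by
          ring
      _ ≤ 2 * k * (‖1 - (starRingEnd ℂ) (z (n+1+1)) * z (n+1)‖ * ‖z (n+1) - z n‖) := C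
      _ = 2 * k * ‖z (n+1) - z n‖ * ‖1 - (starRingEnd ℂ) (z (n+1+1)) * z (n+1)‖ := by ring
  have hgeo : ∀ n, ρ n ≤ ρ 0 * q ^ n := by
    intro n
    induction n with
    | zero => simp
    | succ m ih =>
      calc ρ (m+1) ≤ q * ρ m := hcontr m
        _ ≤ q * (ρ 0 * q ^ m) := mul_le_mul_of_nonneg_left ih hq0
        _ = ρ 0 * q ^ (m+1) := by ring
  have hden2 : ∀ n, ‖1 - (starRingEnd ℂ) (z (n+1)) * z n‖ ≤ 2 := by
    intro n
    calc ‖1 - (starRingEnd ℂ) (z (n+1)) * z n‖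
        ≤ ‖(1:ℂ)‖ + ‖(starRingEnd ℂ) (z (n+1)) * z n‖ := norm_sub_le _ _
      _ ≤ 1 + 1 := by
          gcongr
          · simp
          · rw [norm_mul, RCLike.norm_conj]
            exact mul_le_one₀ (hnorm1 (n+1)).le (norm_nonneg _) (hnorm1 n).le
      _ = 2 := by norm_num
  have hdist : ∀ n, dist (z n) (z (n+1)) ≤ (2 * ρ 0) * q ^ n := by
    intro n
    rw [dist_eq_norm, norm_sub_rev]
    calc ‖z (n+1) - z n‖ = ρ n * ‖1 - (starRingEnd ℂ) (z (n+1)) * z n‖ := by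
          simp only [hρ]
          rw [div_mul_cancel₀ _ (hdenpos n).ne']
      _ ≤ (ρ 0 * q ^ n) * 2 := by
          apply mul_le_mul (hgeo n) (hden2 n) (norm_nonneg _)
          positivity
      _ = (2 * ρ 0) * q ^ n := by ring
  have hcauchy : CauchySeq z := cauchySeq_of_le_geometric q (2 * ρ 0) hq1 hdist
  obtain ⟨L, hL⟩ := cauchySeq_tendsto_of_complete hcauchy
  have hLmem : L ∈ closedBall (0:ℂ) k := by
    apply isClosed_closedBall.mem_of_tendsto hL
    filter_upwards [Filter.eventually_ge_atTop 1] with n hn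
    rw [mem_closedBall, dist_zero_right]
    obtain ⟨m, rfl⟩ := Nat.exists_eq_add_of_le hn
    rw [add_comm, hzs m]
    exact hb _ (hmem m)
  have hLball : L ∈ ball (0:ℂ) 1 := by
    rw [mem_ball, dist_zero_right]
    rw [mem_closedBall, dist_zero_right] at hLmem
    exact lt_of_le_of_lt hLmem hk1
  refine ⟨L, hLball, ?_⟩
  have hcont : ContinuousAt ψ L :=
    (hd.differentiableAt (isOpen_ball.mem_nhds hLball)).continuousAt
  have h1 : Filter.Tendsto (fun n => ψ (z n)) Filter.atTop (nhds (ψ L)) :=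
    hcont.tendsto.comp hL
  have h2 : Filter.Tendsto (fun n => z (n+1)) Filter.atTop (nhds L) :=
    hL.comp (Filter.tendsto_add_atTop_nat 1)
  have h3 : (fun n => z (n+1)) = fun n => ψ (z n) := funext hzs
  rw [h3] at h2
  exact tendsto_nhds_unique h1 h2

set_option maxHeartbeats 1000000 in
lemma sp_bound {ω : ℂ → ℂ} (hd : DifferentiableOn ℂ ω (ball 0 1))
    (hb : ∀ z ∈ ball (0:ℂ) 1, ‖ω z‖ ≤ 1) (hA : ‖ω 0‖ < 1)
    {w : ℂ} (hw : w ∈ ball (0:ℂ) 1) :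
    ‖ω w‖ * (1 + ‖ω 0‖ * ‖w‖) ≤ ‖ω 0‖ + ‖w‖ := by
  have hw0 : (0:ℂ) ∈ ball (0:ℂ) 1 := by simp
  have SP := schwarz_pick_s12 hd hb hw0 hw
  simp only [map_zero, zero_mul, sub_zero, zero_sub, norm_one, mul_one, norm_neg] at SP
  -- SP : ‖ω 0 - ω w‖ ≤ ‖1 - conj (ω 0) * ω w‖ * ‖w‖
  set A := ‖ω 0‖
  set x := ‖ω w‖
  set r := ‖w‖ with hrdef
  set s := ((starRingEnd ℂ) (ω 0) * ω w).re with hs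
  have hx1 : x ≤ 1 := hb w hw
  have hr1 : r < 1 := by rwa [mem_ball, dist_zero_right] at hw
  have hr0 : (0:ℝ) ≤ r := norm_nonneg _
  have hx0 : (0:ℝ) ≤ x := norm_nonneg _
  have hA0 : (0:ℝ) ≤ A := norm_nonneg _
  have hsabs : |s| ≤ A * x := by
    calc |s| ≤ ‖(starRingEnd ℂ) (ω 0) * ω w‖ := Complex.abs_re_le_norm _
    _ = A * x := by rw [norm_mul, RCLike.norm_conj]
  have hid1 : ‖ω 0 - ω w‖^2 = A^2 - 2*s + x^2 := by
    show ‖ω 0 - ω w‖^2 = ‖ω 0‖^2 - 2*((starRingEnd ℂ) (ω 0) * ω w).re + ‖ω w‖^2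
    have e1 := nsq (ω 0 - ω w)
    have e2 := nsq (ω 0)
    have e3 := nsq (ω w)
    simp only [Complex.sub_re, Complex.sub_im] at e1
    rw [e1]
    simp only [Complex.mul_re, Complex.conj_re, Complex.conj_im]
    linear_combination -e2 - e3
  have hid2 : ‖1 - (starRingEnd ℂ) (ω 0) * ω w‖^2 = 1 - 2*s + A^2*x^2 := by
    show ‖1 - (starRingEnd ℂ) (ω 0) * ω w‖^2
      = 1 - 2*((starRingEnd ℂ) (ω 0) * ω w).re + ‖ω 0‖^2 * ‖ω w‖^2
    have e1 := nsq (1 - (starRingEnd ℂ) (ω 0) * ω w)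
    have e2 := nsq (ω 0)
    have e3 := nsq (ω w)
    simp only [Complex.sub_re, Complex.sub_im, Complex.one_re, Complex.one_im] at e1
    rw [e1]
    simp only [Complex.mul_re, Complex.mul_im, Complex.conj_re, Complex.conj_im]
    linear_combination (-(‖ω w‖^2)) * e2 - ((ω 0).re^2 + (ω 0).im^2) * e3
  have hsq : ‖ω 0 - ω w‖^2 ≤ (‖1 - (starRingEnd ℂ) (ω 0) * ω w‖ * r)^2 := by
    apply pow_le_pow_left₀ (norm_nonneg _) SP
  rw [hid1, mul_pow, hid2] at hsq
  -- hsq : A^2 - 2s + x^2 ≤ (1 - 2s + A^2 x^2) * r^2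
  have hsle : s ≤ A * x := (abs_le.mp hsabs).2
  have hr2 : (0:ℝ) ≤ 1 - r^2 := by nlinarith
  have h5 : (x - A)^2 ≤ (r * (1 - A*x))^2 := by
    nlinarith [mul_nonneg (sub_nonneg.mpr hsle) hr2]
  have h6 : (0:ℝ) ≤ r * (1 - A*x) :=
    mul_nonneg hr0 (by nlinarith [mul_le_one₀ hA.le hx0 hx1])
  have h7 : x - A ≤ r * (1 - A*x) := by
    calc x - A ≤ |x - A| := le_abs_self _
    _ = Real.sqrt ((x - A)^2) := (Real.sqrt_sq_eq_abs _).symm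
    _ ≤ Real.sqrt ((r * (1 - A*x))^2) := Real.sqrt_le_sqrt h5
    _ = r * (1 - A*x) := Real.sqrt_sq h6
  nlinarith [h7]

lemma deriv_bound {ω : ℂ → ℂ} (hd : DifferentiableOn ℂ ω (ball 0 1))
    (hb : ∀ z ∈ ball (0:ℂ) 1, ‖ω z‖ ≤ 1) {w : ℂ} (hw : ‖w‖ < 1) :
    ‖deriv ω w‖ ≤ 3 / (1 - ‖w‖) := by
  have hsub : ball w (1 - ‖w‖) ⊆ ball (0:ℂ) 1 := by
    apply ball_subset_ball'
    simp [dist_zero_right]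
  apply Complex.norm_deriv_le_div_of_mapsTo_ball (hd.mono hsub)
  · intro z hz
    rw [mem_closedBall]
    apply le_of_lt
    calc dist (ω z) (ω w) ≤ ‖ω z‖ + ‖ω w‖ := dist_le_norm_add_norm _ _
      _ ≤ 1 + 1 := add_le_add (hb z (hsub hz)) (hb w (by simpa [mem_ball, dist_zero_right]))
      _ < 3 := by norm_num
  · linarith

lemma tz_mem {x : ℂ} (hx : ‖x‖ < 1) {t : ℝ} (ht0 : 0 ≤ t) (ht1 : t ≤ 1) :
    (t:ℂ) * x ∈ ball (0:ℂ) 1 := by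
  rw [mem_ball, dist_zero_right, norm_mul, Complex.norm_real, Real.norm_eq_abs,
    _root_.abs_of_nonneg ht0]
  calc t * ‖x‖ ≤ 1 * ‖x‖ := mul_le_mul_of_nonneg_right ht1 (norm_nonneg _)
    _ < 1 := by simpa using hx

lemma cont_integrand {ω : ℂ → ℂ} (hd : DifferentiableOn ℂ ω (ball 0 1))
    {x : ℂ} (hx : ‖x‖ < 1) :
    ContinuousOn (fun t : ℝ => ω ((t:ℂ) * x) * x) (Set.Icc 0 1) := by
  apply ContinuousOn.mul _ continuousOn_const
  apply hd.continuousOn.comp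
  · exact (Complex.continuous_ofReal.mul continuous_const).continuousOn
  · intro t ht
    exact tz_mem hx ht.1 ht.2

lemma integral_diff {ω : ℂ → ℂ} (hd : DifferentiableOn ℂ ω (ball 0 1))
    (hb : ∀ z ∈ ball (0:ℂ) 1, ‖ω z‖ ≤ 1) :
    DifferentiableOn ℂ (fun z => ∫ t in (0:ℝ)..1, ω ((t:ℂ) * z) * z) (ball 0 1) := by
  have hderivcont : ContinuousOn (deriv ω) (ball 0 1) :=
    ((hd.analyticOnNhd isOpen_ball).deriv).continuousOn
  intro x₀ hx₀
  apply DifferentiableAt.differentiableWithinAt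
  rw [mem_ball, dist_zero_right] at hx₀
  set r0 := ‖x₀‖ with hr0
  set ε := (1 - r0)/2 with hε
  set r' := (1 + r0)/2 with hr'
  have hr'1 : r' < 1 := by rw [hr']; linarith
  have hεpos : 0 < ε := by rw [hε]; linarith
  have hxmem : ∀ x ∈ ball x₀ ε, ‖x‖ < r' := by
    intro x hx
    rw [mem_ball, dist_eq_norm] at hx
    calc ‖x‖ = ‖(x - x₀) + x₀‖ := by ring_nf
      _ ≤ ‖x - x₀‖ + ‖x₀‖ := norm_add_le _ _
      _ < ε + r0 := by linarith
      _ = r' := by rw [hε, hr']; ring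
  have huIoc : Set.uIoc (0:ℝ) 1 = Set.Ioc (0:ℝ) 1 := Set.uIoc_of_le zero_le_one
  set F' : ℂ → ℝ → ℂ :=
    fun x t => ((t:ℂ) * deriv ω ((t:ℂ) * x)) * x + ω ((t:ℂ) * x) with hF'
  have key := intervalIntegral.hasDerivAt_integral_of_dominated_loc_of_deriv_le
    (F := fun x => fun t : ℝ => ω ((t:ℂ) * x) * x) (F' := F')
    (μ := volume) (a := 0) (b := 1) (x₀ := x₀)
    (s := ball x₀ ε) (bound := fun _ => 3/(1 - r') + 1) (ball_mem_nhds x₀ hεpos)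
    ?_ ?_ ?_ ?_ ?_ ?_
  · exact key.2.differentiableAt
  · -- measurability eventually
    filter_upwards [isOpen_ball.eventually_mem (by rwa [mem_ball, dist_zero_right] : x₀ ∈ ball (0:ℂ) 1)]
      with x hx
    apply ContinuousOn.aestronglyMeasurable _ measurableSet_uIoc
    rw [huIoc]
    exact (cont_integrand hd (by rwa [mem_ball, dist_zero_right] at hx)).mono
      Set.Ioc_subset_Icc_self
  · exact (cont_integrand hd hx₀).intervalIntegrable_of_Icc zero_le_one
  · -- F' x₀ measurable
    apply ContinuousOn.aestronglyMeasurable _ measurableSet_uIoc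
    rw [huIoc]
    have hc : ContinuousOn (fun t : ℝ => (t:ℂ) * x₀) (Set.Ioc 0 1) :=
      (Complex.continuous_ofReal.mul continuous_const).continuousOn
    have hmap : ∀ t ∈ Set.Ioc (0:ℝ) 1, (t:ℂ) * x₀ ∈ ball (0:ℂ) 1 :=
      fun t ht => tz_mem hx₀ ht.1.le ht.2
    apply ContinuousOn.add
    · apply ContinuousOn.mul _ continuousOn_const
      apply ContinuousOn.mul (Complex.continuous_ofReal.continuousOn)
      exact hderivcont.comp hc hmap
    · exact hd.continuousOn.comp hc hmap
  · -- bound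
    apply MeasureTheory.ae_of_all
    intro t ht x hx
    rw [huIoc] at ht
    have htx : ‖(t:ℂ) * x‖ < r' := by
      rw [norm_mul, Complex.norm_real, Real.norm_eq_abs, _root_.abs_of_nonneg ht.1.le]
      calc t * ‖x‖ ≤ 1 * ‖x‖ := mul_le_mul_of_nonneg_right ht.2 (norm_nonneg _)
        _ < r' := by simpa using hxmem x hx
    have htx1 : ‖(t:ℂ) * x‖ < 1 := htx.trans hr'1
    have hx1 : ‖x‖ ≤ 1 := (hxmem x hx).le.trans hr'1.le
    rw [hF']
    calc ‖((t:ℂ) * deriv ω ((t:ℂ) * x)) * x + ω ((t:ℂ) * x)‖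
        ≤ ‖((t:ℂ) * deriv ω ((t:ℂ) * x)) * x‖ + ‖ω ((t:ℂ) * x)‖ := norm_add_le _ _
      _ ≤ ‖(t:ℂ)‖ * ‖deriv ω ((t:ℂ) * x)‖ * ‖x‖ + 1 := by
          rw [norm_mul, norm_mul]
          gcongr
          exact hb _ (by rwa [mem_ball, dist_zero_right])
      _ ≤ 1 * (3/(1 - r')) * 1 + 1 := by
          have htn : ‖((t:ℝ):ℂ)‖ ≤ 1 := by
            rw [Complex.norm_real, Real.norm_eq_abs, _root_.abs_of_nonneg ht.1.le]; exact ht.2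
          have hbd : ‖deriv ω ((t:ℂ) * x)‖ ≤ 3/(1 - r') := by
            calc ‖deriv ω ((t:ℂ) * x)‖ ≤ 3 / (1 - ‖(t:ℂ) * x‖) := deriv_bound hd hb htx1
              _ ≤ 3 / (1 - r') := by
                  apply div_le_div_of_nonneg_left (by norm_num) (by linarith) (by linarith)
          have h30 : (0:ℝ) ≤ 3/(1 - r') := div_nonneg (by norm_num) (by linarith)
          apply add_le_add_left
          apply mul_le_mul _ hx1 (norm_nonneg _) (by nlinarith)
          exact mul_le_mul htn hbd (norm_nonneg _) zero_le_one
      _ = 3/(1 - r') + 1 := by ring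
  · exact intervalIntegrable_const
  · -- differentiability
    apply MeasureTheory.ae_of_all
    intro t ht x hx
    rw [huIoc] at ht
    have htx1 : ((t:ℂ) * x) ∈ ball (0:ℂ) 1 := tz_mem (lt_trans (hxmem x hx) hr'1) ht.1.le ht.2
    have hωd : DifferentiableAt ℂ ω ((t:ℂ)*x) := hd.differentiableAt (isOpen_ball.mem_nhds htx1)
    have hlin : HasDerivAt (fun y : ℂ => (t:ℂ) * y) ((t:ℂ) * 1) x :=
      (hasDerivAt_id x).const_mul ((t:ℝ):ℂ)
    have h1 : HasDerivAt (fun y : ℂ => ω ((t:ℂ)*y)) (deriv ω ((t:ℂ)*x) * ((t:ℂ) * 1)) x :=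
      HasDerivAt.comp x hωd.hasDerivAt hlin
    have h2 : HasDerivAt (fun y : ℂ => ω ((t:ℂ)*y) * y)
        ((deriv ω ((t:ℂ)*x) * ((t:ℂ) * 1)) * x + ω ((t:ℂ)*x) * 1) x :=
      h1.mul (hasDerivAt_id x)
    rw [hF']
    convert h2 using 1
    show (t:ℂ) * deriv ω ((t:ℂ) * x) * x + ω ((t:ℂ) * x) = _
    ring
    all_goals rfl

lemma h_bound {ω : ℂ → ℂ} (hd : DifferentiableOn ℂ ω (ball 0 1))
    (hb : ∀ z ∈ ball (0:ℂ) 1, ‖ω z‖ ≤ 1) (hA : ‖ω 0‖ < 1)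
    {lam : ℝ} (hlam : 0 < lam) {z : ℂ} (hz : z ∈ ball (0:ℂ) 1) :
    ‖1 + (lam:ℂ) * z * (∫ t in (0:ℝ)..1, ω ((t:ℂ) * z) * z)‖
      ≤ 1 + lam * ∫ t in (0:ℝ)..1, (‖ω 0‖ + t) / (1 + ‖ω 0‖ * t) := by
  rw [mem_ball, dist_zero_right] at hz
  set A := ‖ω 0‖ with hAdef
  set r := ‖z‖ with hrdef
  have hA0 : 0 ≤ A := norm_nonneg _
  have hr0 : 0 ≤ r := norm_nonneg _
  -- pointwise comparison
  have hptwise : ∀ t ∈ Set.Icc (0:ℝ) 1, r * ‖ω ((t:ℂ) * z) * z‖ ≤ (A + t) / (1 + A * t) := by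
    intro t ht
    obtain ⟨ht0, ht1⟩ := ht
    have htz : ((t:ℂ) * z) ∈ ball (0:ℂ) 1 := tz_mem hz ht0 ht1
    have hnorm_tz : ‖(t:ℂ) * z‖ = t * r := by
      rw [norm_mul, Complex.norm_real, Real.norm_eq_abs, _root_.abs_of_nonneg ht0]
    have hden1 : (0:ℝ) < 1 + A * (t * r) := by positivity
    have hden2 : (0:ℝ) < 1 + A * t := by positivity
    have hsp := sp_bound hd hb hA htz
    rw [hnorm_tz, ← hAdef] at hsp
    -- hsp : ‖ω (t z)‖ * (1 + A * (t*r)) ≤ A + t*r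
    have hωtz : ‖ω ((t:ℂ) * z)‖ ≤ (A + t * r) / (1 + A * (t * r)) := by
      rw [le_div_iff₀ hden1]; exact hsp
    calc r * ‖ω ((t:ℂ) * z) * z‖ = r^2 * ‖ω ((t:ℂ) * z)‖ := by
          rw [norm_mul, ← hrdef]; ring
      _ ≤ r^2 * ((A + t * r) / (1 + A * (t * r))) := by
          apply mul_le_mul_of_nonneg_left hωtz (by positivity)
      _ ≤ (A + t) / (1 + A * t) := by
          rw [← mul_div_assoc, div_le_div_iff₀ hden1 hden2]
          have e2 : (A + t*r) * (1 + A*t) ≤ (A + t) * (1 + A*(t*r)) := by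
            nlinarith [mul_nonneg (mul_nonneg ht0 (by linarith : (0:ℝ) ≤ 1 - r))
              (by nlinarith : (0:ℝ) ≤ 1 - A^2)]
          have hprod : (0:ℝ) ≤ (A + t*r) * (1 + A*t) := by positivity
          have hr2 : r^2 ≤ 1 := by nlinarith
          calc r^2 * (A + t*r) * (1 + A*t) = r^2 * ((A + t*r) * (1 + A*t)) := by ring
            _ ≤ 1 * ((A + t*r) * (1 + A*t)) := by
                exact mul_le_mul_of_nonneg_right hr2 hprod
            _ = (A + t*r) * (1 + A*t) := by ring
            _ ≤ (A + t) * (1 + A*(t*r)) := e2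
  -- integrability
  have hcont : ContinuousOn (fun t : ℝ => r * ‖ω ((t:ℂ) * z) * z‖) (Set.Icc 0 1) :=
    continuousOn_const.mul (cont_integrand hd hz).norm
  have hint1 : IntervalIntegrable (fun t : ℝ => r * ‖ω ((t:ℂ) * z) * z‖) volume 0 1 :=
    hcont.intervalIntegrable_of_Icc zero_le_one
  have hint2 : IntervalIntegrable (fun t : ℝ => (A + t) / (1 + A * t)) volume 0 1 := by
    apply ContinuousOn.intervalIntegrable_of_Icc zero_le_one
    apply ContinuousOn.div
    · exact (continuousOn_const.add continuousOn_id)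
    · exact (continuousOn_const.add (continuousOn_const.mul continuousOn_id))
    · intro t ht
      have : (0:ℝ) < 1 + A * t := by nlinarith [ht.1]
      exact this.ne'
  have hmono := intervalIntegral.integral_mono_on zero_le_one hint1 hint2 hptwise
  have hnormint : IntervalIntegrable (fun t : ℝ => ‖ω ((t:ℂ) * z) * z‖) volume 0 1 :=
    ((cont_integrand hd hz).norm).intervalIntegrable_of_Icc zero_le_one
  calc ‖1 + (lam:ℂ) * z * (∫ t in (0:ℝ)..1, ω ((t:ℂ) * z) * z)‖
      ≤ ‖(1:ℂ)‖ + ‖(lam:ℂ) * z * (∫ t in (0:ℝ)..1, ω ((t:ℂ) * z) * z)‖ := norm_add_le _ _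
    _ = 1 + lam * (r * ‖∫ t in (0:ℝ)..1, ω ((t:ℂ) * z) * z‖) := by
        rw [norm_one, norm_mul, norm_mul, Complex.norm_real, Real.norm_eq_abs,
          _root_.abs_of_pos hlam, ← hrdef]
        ring
    _ ≤ 1 + lam * (r * ∫ t in (0:ℝ)..1, ‖ω ((t:ℂ) * z) * z‖) := by
        have := intervalIntegral.norm_integral_le_integral_norm
          (f := fun t : ℝ => ω ((t:ℂ) * z) * z) (μ := volume) (a := 0) (b := 1) zero_le_one
        gcongr
    _ = 1 + lam * (∫ t in (0:ℝ)..1, r * ‖ω ((t:ℂ) * z) * z‖) := by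
        rw [← intervalIntegral.integral_const_mul]
    _ ≤ 1 + lam * ∫ t in (0:ℝ)..1, (A + t) / (1 + A * t) := by gcongr

theorem stmt_12 (lam : ℝ) (hlam : 0 < lam) (hlam1 : lam < 1)
    (ω : ℂ → ℂ) (a a₂ : ℂ) (f : ℂ → ℂ)
    (hω : DifferentiableOn ℂ ω (ball (0:ℂ) 1))
    (hbound : ∀ z ∈ ball (0:ℂ) 1, ‖ω z‖ ≤ 1)
    (h0 : ω 0 = a) (ha : ‖a‖ < 1)
    (hden : ∀ z ∈ ball (0:ℂ) 1,
      1 - a₂ * z + (lam:ℂ) * z * (∫ t in (0:ℝ)..1, ω ((t:ℂ) * z) * z) ≠ 0)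
    (hf : ∀ z ∈ ball (0:ℂ) 1,
      f z = z / (1 - a₂ * z + (lam:ℂ) * z * (∫ t in (0:ℝ)..1, ω ((t:ℂ) * z) * z)))
    (hU : ∀ z ∈ ball (0:ℂ) 1, z ≠ 0 → ‖(z / f z)^2 * deriv f z - 1‖ < lam) :
    ‖a₂‖ ≤ 1 + lam * ∫ t in (0:ℝ)..1, (‖a‖ + t) / (1 + ‖a‖ * t) := by
  set V : ℝ := ∫ t in (0:ℝ)..1, (‖a‖ + t) / (1 + ‖a‖ * t) with hV
  have hA : ‖ω 0‖ < 1 := by rwa [h0]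
  have hV0 : 0 ≤ V := by
    rw [hV]
    apply intervalIntegral.integral_nonneg zero_le_one
    intro u hu
    have h1 : (0:ℝ) < 1 + ‖a‖ * u := by nlinarith [hu.1, norm_nonneg a]
    exact div_nonneg (by nlinarith [hu.1, norm_nonneg a]) h1.le
  by_contra hcon
  push_neg at hcon
  -- hcon : 1 + lam * V < ‖a₂‖
  have ha₂pos : 0 < ‖a₂‖ := by nlinarith
  have ha₂ne : a₂ ≠ 0 := norm_pos_iff.mp ha₂pos
  set ψ : ℂ → ℂ := fun z =>
    (1 + (lam:ℂ) * z * (∫ t in (0:ℝ)..1, ω ((t:ℂ) * z) * z)) / a₂ with hψ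
  set k : ℝ := (1 + lam * V) / ‖a₂‖ with hk
  have hk0 : 0 ≤ k := by
    apply div_nonneg _ ha₂pos.le
    nlinarith
  have hk1 : k < 1 := by
    rw [hk, div_lt_one ha₂pos]
    exact hcon
  have hψd : DifferentiableOn ℂ ψ (ball 0 1) := by
    rw [hψ]
    apply DifferentiableOn.div_const
    apply DifferentiableOn.add (differentiableOn_const 1)
    exact ((differentiableOn_const _).mul differentiableOn_id).mul (integral_diff hω hbound)
  have hψb : ∀ z ∈ ball (0:ℂ) 1, ‖ψ z‖ ≤ k := by
    intro z hz
    have hb2 := h_bound hω hbound hA hlam hz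
    rw [h0] at hb2
    rw [hψ, hk, hV]
    simp only [norm_div]
    gcongr
  obtain ⟨z₀, hz₀, hfix⟩ := fixed_point hk0 hk1 hψd hψb
  have h2 : (1 + (lam:ℂ) * z₀ * (∫ t in (0:ℝ)..1, ω ((t:ℂ) * z₀) * z₀)) / a₂ = z₀ := hfix
  have h3 : 1 + (lam:ℂ) * z₀ * (∫ t in (0:ℝ)..1, ω ((t:ℂ) * z₀) * z₀) = z₀ * a₂ :=
    (div_eq_iff ha₂ne).mp h2
  exact hden z₀ hz₀ (by linear_combination h3)
end

section
/- Suppose φ : 𝔻 → 𝔻 is analytic on a neighborhood of the closed unit disk with φ(0) = 0, there exists θ₀ with φ(e^{iθ₀}) = −1, and φ is not a rotation z ↦ e^{iθ}z. Write m(θ₀) = e^{iθ₀} φ'(e^{iθ₀})/φ(e^{iθ₀}). Then m(θ₀) is real and m(θ₀) > 1. -/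
open Metric Complex Filter Set Topology

private lemma left_deriv_nonpos {f : ℝ → ℝ} {d a : ℝ} (hf : HasDerivAt f d a)
    (h0 : f a = 0) (hnn : ∀ᶠ r in 𝓝[<] a, 0 ≤ f r) : d ≤ 0 := by
  have ht : Tendsto (slope f a) (𝓝[<] a) (𝓝 d) :=
    (hasDerivAt_iff_tendsto_slope.mp hf).mono_left
      (nhdsWithin_mono a fun x hx => ne_of_lt hx)
  refine le_of_tendsto ht ?_
  filter_upwards [hnn, self_mem_nhdsWithin] with r hr hr'
  have hlt : r - a < 0 := sub_neg.mpr hr'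
  have hq : f r / (r - a) ≤ 0 := div_nonpos_of_nonneg_of_nonpos hr hlt.le
  simpa [slope_def_field, h0, div_eq_inv_mul] using hq

private lemma hasDerivAt_normSq_comp {F : ℝ → ℂ} {F' : ℂ} {x : ℝ} (h : HasDerivAt F F' x) :
    HasDerivAt (fun t => Complex.normSq (F t)) (2 * ((starRingEnd ℂ) (F x) * F').re) x := by
  have hre : HasDerivAt (fun t => (F t).re) F'.re x :=
    Complex.reCLM.hasFDerivAt.comp_hasDerivAt x h
  have him : HasDerivAt (fun t => (F t).im) F'.im x :=
    Complex.imCLM.hasFDerivAt.comp_hasDerivAt x h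
  have h2 := (hre.mul hre).add (him.mul him)
  have hfun : (fun t => Complex.normSq (F t))
      = fun t => (F t).re * (F t).re + (F t).im * (F t).im :=
    funext fun t => Complex.normSq_apply _
  rw [hfun]
  refine h2.congr_deriv ?_
  simp [Complex.mul_re, Complex.conj_re, Complex.conj_im]
  ring

theorem stmt_15 (φ : ℂ → ℂ) (s : Set ℂ) (hs : IsOpen s)
    (hsub : closedBall (0:ℂ) 1 ⊆ s)
    (hφ : DifferentiableOn ℂ φ s)
    (h0 : φ 0 = 0)
    (hmap : ∀ z ∈ ball (0:ℂ) 1, ‖φ z‖ < 1)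
    (hrot : ¬ ∃ θ : ℝ, ∀ z ∈ ball (0:ℂ) 1, φ z = Complex.exp (θ * Complex.I) * z)
    (θ₀ : ℝ) (hθ₀ : φ (Complex.exp (θ₀ * Complex.I)) = -1) :
    ∃ m : ℝ, 1 < m ∧
      Complex.exp (θ₀ * Complex.I) * deriv φ (Complex.exp (θ₀ * Complex.I)) /
        φ (Complex.exp (θ₀ * Complex.I)) = (m : ℂ) := by
  set z₀ : ℂ := Complex.exp (θ₀ * Complex.I) with hz₀def
  have hz₀abs : ‖z₀‖ = 1 := Complex.norm_exp_ofReal_mul_I θ₀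
  have hz₀ne : z₀ ≠ 0 := Complex.exp_ne_zero _
  have hz₀cb : z₀ ∈ closedBall (0:ℂ) 1 := by
    simp [mem_closedBall, Complex.dist_eq, hz₀abs]
  have hballs : ball (0:ℂ) 1 ⊆ s := ball_subset_closedBall.trans hsub
  have h0ball : (0:ℂ) ∈ ball (0:ℂ) 1 := by simp
  have hs0 : s ∈ 𝓝 (0:ℂ) := hs.mem_nhds (hballs h0ball)
  set ψ : ℂ → ℂ := dslope φ 0 with hψdef
  have hψdiff : DifferentiableOn ℂ ψ s := (differentiableOn_dslope hs0).mpr hφ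
  have hφψ : ∀ z, φ z = z * ψ z := by
    intro z
    have h := sub_smul_dslope φ 0 z
    simp only [sub_zero, h0, smul_eq_mul] at h
    rw [← hψdef] at h
    rw [← h]
  have hψAt : ∀ z ∈ closedBall (0:ℂ) 1, DifferentiableAt ℂ ψ z := fun z hz =>
    hψdiff.differentiableAt (hs.mem_nhds (hsub hz))
  have hmapsTo : Set.MapsTo φ (ball (0:ℂ) 1) (ball (φ 0) 1) := by
    rw [h0]; intro z hz; exact mem_ball_zero_iff.mpr (hmap z hz)
  have hψball : ∀ z ∈ ball (0:ℂ) 1, ‖ψ z‖ ≤ 1 := by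
    intro z hz
    have := Complex.norm_dslope_le_div_of_mapsTo_ball (hφ.mono hballs) (hmapsTo.mono_right ball_subset_closedBall) hz
    simpa [hψdef] using this
  have hψle : ∀ z ∈ closedBall (0:ℂ) 1, ‖ψ z‖ ≤ 1 := by
    intro z hz
    have hcl : z ∈ closure (ball (0:ℂ) 1) := by
      rwa [closure_ball (0:ℂ) one_ne_zero]
    have hc : Filter.Tendsto (fun w => ‖ψ w‖) (nhdsWithin z (ball (0:ℂ) 1)) (nhds ‖ψ z‖) :=
      ((hψAt z hz).continuousAt.continuousWithinAt).norm
    have hne : (nhdsWithin z (ball (0:ℂ) 1)).NeBot := mem_closure_iff_nhdsWithin_neBot.mp hcl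
    exact le_of_tendsto hc (eventually_nhdsWithin_of_forall fun w hw => hψball w hw)
  have hψlt : ∀ z ∈ ball (0:ℂ) 1, ‖ψ z‖ < 1 := by
    intro c hc
    rcases lt_or_eq_of_le (hψball c hc) with h | h
    · exact h
    exfalso
    have hmax : IsMaxOn (norm ∘ ψ) (ball (0:ℂ) 1) c := by
      apply isMaxOn_iff.mpr
      intro z hz
      simpa [Function.comp, h] using hψball z hz
    have heq := Complex.eqOn_of_isPreconnected_of_isMaxOn_norm
      (convex_ball (0:ℂ) 1).isPreconnected isOpen_ball (hψdiff.mono hballs) hc hmax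
    refine hrot ⟨(ψ c).arg, fun z hz => ?_⟩
    have habs1 : ‖ψ c‖ = 1 := h
    have hexp : Complex.exp (((ψ c).arg : ℂ) * Complex.I) = ψ c := by
      have h2 := Complex.norm_mul_exp_arg_mul_I (ψ c)
      rwa [habs1, Complex.ofReal_one, one_mul] at h2
    have hzc : ψ z = ψ c := heq hz
    rw [hφψ z, hzc, hexp]
    ring
  -- constants
  set a : ℂ := ψ z₀ with ha_def
  have hz₀a : z₀ * a = -1 := by
    rw [← hφψ]; exact hθ₀
  have hanorm : ‖a‖ = 1 := by
    have h1 : ‖z₀ * a‖ = 1 := by rw [hz₀a]; simp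
    rwa [norm_mul, hz₀abs, one_mul] at h1
  have hconj_a : (starRingEnd ℂ) a * a = 1 := by
    rw [mul_comm, Complex.mul_conj]
    rw [Complex.normSq_eq_norm_sq, hanorm]
    norm_num
  set w : ℂ → ℂ := fun z => 1 - (starRingEnd ℂ) a * ψ z with hw_def
  set w0 : ℂ := w 0 with hw0_def
  have hre_w : ∀ z ∈ closedBall (0:ℂ) 1, 0 ≤ (w z).re := by
    intro z hz
    have h1 : ((starRingEnd ℂ) a * ψ z).re ≤ 1 := by
      calc ((starRingEnd ℂ) a * ψ z).re ≤ ‖(starRingEnd ℂ) a * ψ z‖ :=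
            Complex.re_le_norm _
        _ = ‖ψ z‖ := by rw [norm_mul, Complex.norm_conj, hanorm, one_mul]
        _ ≤ 1 := hψle z hz
    simp only [hw_def, Complex.sub_re, Complex.one_re]
    linarith
  have hre_w_pos : ∀ z ∈ ball (0:ℂ) 1, 0 < (w z).re := by
    intro z hz
    have h1 : ((starRingEnd ℂ) a * ψ z).re < 1 := by
      calc ((starRingEnd ℂ) a * ψ z).re ≤ ‖(starRingEnd ℂ) a * ψ z‖ :=
            Complex.re_le_norm _
        _ = ‖ψ z‖ := by rw [norm_mul, Complex.norm_conj, hanorm, one_mul]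
        _ < 1 := hψlt z hz
    simp only [hw_def, Complex.sub_re, Complex.one_re]
    linarith
  have hw0pos : 0 < w0.re := hre_w_pos 0 h0ball
  have hw0ne : w0 ≠ 0 := fun h => by simp [h] at hw0pos
  have hconj_w0_ne : (starRingEnd ℂ) w0 ≠ 0 := by
    simpa using hw0ne
  have hwz₀ : w z₀ = 0 := by
    simp only [hw_def, ← ha_def, hconj_a, sub_self]
  set g : ℂ → ℂ := fun z => (w z - w0) / (w z + (starRingEnd ℂ) w0) with hg_def
  have hden_ne : ∀ z ∈ closedBall (0:ℂ) 1, w z + (starRingEnd ℂ) w0 ≠ 0 := by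
    intro z hz h
    have h1 := hre_w z hz
    have h2 : (w z + (starRingEnd ℂ) w0).re = (w z).re + w0.re := by
      simp [Complex.add_re, Complex.conj_re]
    rw [h] at h2
    simp at h2
    linarith
  have hkey : ∀ ζ : ℂ, Complex.normSq (ζ + (starRingEnd ℂ) w0) - Complex.normSq (ζ - w0)
      = 4 * ζ.re * w0.re := by
    intro ζ
    simp only [Complex.normSq_apply, Complex.add_re, Complex.add_im, Complex.sub_re,
      Complex.sub_im, Complex.conj_re, Complex.conj_im]
    ring
  have hgle : ∀ z ∈ closedBall (0:ℂ) 1, Complex.normSq (g z) ≤ 1 := by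
    intro z hz
    have hd := hden_ne z hz
    have hdpos : 0 < Complex.normSq (w z + (starRingEnd ℂ) w0) := Complex.normSq_pos.mpr hd
    have h4 : 0 ≤ 4 * (w z).re * w0.re :=
      mul_nonneg (mul_nonneg (by norm_num) (hre_w z hz)) hw0pos.le
    have hk := hkey (w z)
    simp only [hg_def]
    rw [Complex.normSq_div, div_le_one hdpos]
    linarith
  have hglt : ∀ z ∈ ball (0:ℂ) 1, Complex.normSq (g z) < 1 := by
    intro z hz
    have hz' := ball_subset_closedBall hz
    have hd := hden_ne z hz'
    have hdpos : 0 < Complex.normSq (w z + (starRingEnd ℂ) w0) := Complex.normSq_pos.mpr hd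
    have h4 : 0 < 4 * (w z).re * w0.re :=
      mul_pos (mul_pos (by norm_num) (hre_w_pos z hz)) hw0pos
    have hk := hkey (w z)
    simp only [hg_def]
    rw [Complex.normSq_div, div_lt_one hdpos]
    linarith
  have hg0 : g 0 = 0 := by
    simp [hg_def, ← hw0_def]
  have hgz₀ : g z₀ = -w0 / (starRingEnd ℂ) w0 := by
    simp [hg_def, hwz₀]
  have hgz₀nsq : Complex.normSq (g z₀) = 1 := by
    rw [hgz₀, Complex.normSq_div]
    simp only [Complex.normSq_neg, Complex.normSq_conj]
    exact div_self (fun h => hw0ne (Complex.normSq_eq_zero.mp h))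
  -- Schwarz for g
  have hwdiff : DifferentiableOn ℂ w s := by
    exact (hψdiff.const_smul ((starRingEnd ℂ) a)).const_sub 1
  have hgdiff : DifferentiableOn ℂ g (ball (0:ℂ) 1) := by
    apply DifferentiableOn.div
    · exact (hwdiff.mono hballs).sub_const w0
    · exact (hwdiff.mono hballs).add_const _
    · exact fun z hz => hden_ne z (ball_subset_closedBall hz)
  have hmapsg : Set.MapsTo g (ball (0:ℂ) 1) (ball (0:ℂ) 1) := by
    intro z hz
    rw [mem_ball_zero_iff]
    have h1 := hglt z hz
    rw [← Complex.sq_norm] at h1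
    nlinarith [norm_nonneg (g z)]
  have hschwarz : ∀ r : ℝ, |r| < 1 → ‖g ((r:ℂ) * z₀)‖ ≤ |r| := by
    intro r hr
    have hz : ‖(r:ℂ) * z₀‖ < 1 := by
      rw [norm_mul, hz₀abs, mul_one, Complex.norm_real, Real.norm_eq_abs]; exact hr
    have h1 := Complex.norm_le_norm_of_mapsTo_ball_self hgdiff (hmapsg.mono_right ball_subset_closedBall) hg0 hz
    rwa [norm_mul, hz₀abs, mul_one, Complex.norm_real, Real.norm_eq_abs] at h1
  -- derivatives at z₀
  set ψ' : ℂ := deriv ψ z₀ with hψ'def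
  have hψz₀d : HasDerivAt ψ ψ' z₀ := (hψAt z₀ hz₀cb).hasDerivAt
  have hw' : HasDerivAt w (-((starRingEnd ℂ) a * ψ')) z₀ := by
    have h1 := (hψz₀d.const_mul ((starRingEnd ℂ) a)).const_sub 1
    exact h1
  have hnum' : HasDerivAt (fun z => w z - w0) (-((starRingEnd ℂ) a * ψ')) z₀ := hw'.sub_const w0
  have hden' : HasDerivAt (fun z => w z + (starRingEnd ℂ) w0) (-((starRingEnd ℂ) a * ψ')) z₀ :=
    hw'.add_const _
  set G₀ : ℂ := -((starRingEnd ℂ) a * ψ') * (w0 + (starRingEnd ℂ) w0) / ((starRingEnd ℂ) w0)^2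
    with hG₀def
  have hgz₀' : HasDerivAt g G₀ z₀ := by
    have h := hnum'.div hden' (hden_ne z₀ hz₀cb)
    refine h.congr_deriv ?_
    rw [hwz₀, hG₀def]
    ring
  -- radial derivative
  have hrad : HasDerivAt (fun r : ℝ => Complex.normSq (g ((r:ℂ) * z₀)))
      (2 * ((starRingEnd ℂ) (g z₀) * (G₀ * z₀)).re) 1 := by
    have hmul : HasDerivAt (fun z : ℂ => z * z₀) z₀ ((1:ℝ):ℂ) := by
      simpa using (hasDerivAt_id (((1:ℝ):ℂ))).mul_const z₀
    have hgat : HasDerivAt g G₀ (((1:ℝ):ℂ) * z₀) := by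
      rw [Complex.ofReal_one, one_mul]; exact hgz₀'
    have hinner := HasDerivAt.comp (((1:ℝ):ℂ)) hgat hmul
    have hro := hinner.comp_ofReal (z := 1)
    have h2 := hasDerivAt_normSq_comp hro
    simpa [Function.comp] using h2
  have hre_ge : 1 ≤ ((starRingEnd ℂ) (g z₀) * (G₀ * z₀)).re := by
    have hp : HasDerivAt (fun r : ℝ => r^2) 2 1 := by
      simpa using hasDerivAt_pow 2 (1:ℝ)
    have hDf : HasDerivAt (fun r : ℝ => r^2 - Complex.normSq (g ((r:ℂ) * z₀)))
        (2 - 2 * ((starRingEnd ℂ) (g z₀) * (G₀ * z₀)).re) 1 := hp.sub hrad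
    have hle := left_deriv_nonpos hDf ?_ ?_
    · linarith
    · simp [hgz₀nsq]
    · filter_upwards [Ioo_mem_nhdsLT_of_mem (by norm_num : (1:ℝ) ∈ Set.Ioc 0 1)] with r hr
      have h1 : |r| < 1 := abs_lt.mpr ⟨by linarith [hr.1], hr.2⟩
      have h2 := hschwarz r h1
      have h3 : ‖g ((r:ℂ) * z₀)‖ ^ 2 ≤ |r| ^ 2 :=
        pow_le_pow_left₀ (norm_nonneg _) h2 2
      rw [Complex.sq_norm, _root_.sq_abs] at h3
      linarith
  -- tangential derivative
  have htan : HasDerivAt (fun θ : ℝ => Complex.normSq (g (Complex.exp ((θ:ℂ) * Complex.I))))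
      (2 * ((starRingEnd ℂ) (g z₀) * (G₀ * (z₀ * Complex.I))).re) θ₀ := by
    have hexp : HasDerivAt (fun z : ℂ => Complex.exp (z * Complex.I)) (z₀ * Complex.I)
        ((θ₀:ℝ):ℂ) := by
      have h1 := ((hasDerivAt_id (((θ₀:ℝ):ℂ))).mul_const Complex.I).cexp
      simpa [hz₀def] using h1
    have hgat : HasDerivAt g G₀ (Complex.exp (((θ₀:ℝ):ℂ) * Complex.I)) := hgz₀'
    have hinner := HasDerivAt.comp (((θ₀:ℝ):ℂ)) hgat hexp
    have hro := hinner.comp_ofReal (z := θ₀)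
    have h2 := hasDerivAt_normSq_comp hro
    simpa [Function.comp, ← hz₀def] using h2
  have hmaxtan : IsLocalMax (fun θ : ℝ => Complex.normSq (g (Complex.exp ((θ:ℂ) * Complex.I)))) θ₀ := by
    apply Filter.Eventually.of_forall
    intro θ
    have hmem : Complex.exp ((θ:ℂ) * Complex.I) ∈ closedBall (0:ℂ) 1 := by
      simp [mem_closedBall, Complex.dist_eq, Complex.norm_exp_ofReal_mul_I]
    have := hgle _ hmem
    simp only [← hz₀def]
    rw [hgz₀nsq]
    exact this
  have hzero := hmaxtan.hasDerivAt_eq_zero htan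
  have him0 : ((starRingEnd ℂ) (g z₀) * (G₀ * z₀)).im = 0 := by
    have hre : ((starRingEnd ℂ) (g z₀) * (G₀ * (z₀ * Complex.I)))
        = ((starRingEnd ℂ) (g z₀) * (G₀ * z₀)) * Complex.I := by ring
    rw [hre, Complex.mul_I_re] at hzero
    linarith [hzero]
  -- algebra
  set t : ℂ := (starRingEnd ℂ) a * z₀ * ψ' with htdef
  set κ : ℝ := 2 * w0.re / Complex.normSq w0 with hκdef
  have hκpos : 0 < κ := div_pos (by linarith) (Complex.normSq_pos.mpr hw0ne)
  have hκc : ((κ:ℝ) : ℂ) = (w0 + (starRingEnd ℂ) w0) / (w0 * (starRingEnd ℂ) w0) := by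
    rw [hκdef]
    push_cast
    rw [Complex.mul_conj, Complex.add_conj]
    push_cast
    ring
  have hτ' : (starRingEnd ℂ) (g z₀) * (G₀ * z₀) = t * (κ:ℂ) := by
    rw [hgz₀, hG₀def, htdef, hκc, map_div₀, map_neg, Complex.conj_conj]
    field_simp
  have htim : t.im = 0 := by
    have h1 : (t * (κ:ℂ)).im = 0 := by rw [← hτ']; exact him0
    have h2 : t.im * κ = 0 := by
      simpa [Complex.mul_im, Complex.ofReal_re, Complex.ofReal_im] using h1
    exact (mul_eq_zero.mp h2).resolve_right hκpos.ne'
  have htre_pos : 0 < t.re := by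
    have h1 : 1 ≤ (t * (κ:ℂ)).re := by rw [← hτ']; exact hre_ge
    have h2 : (t * (κ:ℂ)).re = t.re * κ := by
      simp [Complex.mul_re, Complex.ofReal_re, Complex.ofReal_im]
    rw [h2] at h1
    by_contra h
    push_neg at h
    nlinarith
  -- final computation
  refine ⟨1 + t.re, by linarith, ?_⟩
  have hz₀conj : z₀ * (starRingEnd ℂ) z₀ = 1 := by
    rw [Complex.mul_conj, Complex.normSq_eq_norm_sq, hz₀abs]
    norm_num
  have ha2 : a = -((starRingEnd ℂ) z₀) := by
    apply mul_left_cancel₀ hz₀ne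
    rw [hz₀a, mul_neg, hz₀conj]
  have hderivφ : deriv φ z₀ = a + z₀ * ψ' := by
    have hφd : HasDerivAt φ (1 * ψ z₀ + z₀ * ψ') z₀ := by
      have h1 := (hasDerivAt_id z₀).mul hψz₀d
      have hfun : φ = fun z => z * ψ z := funext hφψ
      rw [hfun]
      exact h1
    rw [hφd.deriv]
    rw [← ha_def]
    ring
  have htreC : ((t.re : ℝ) : ℂ) = t := by
    apply Complex.ext
    · simp
    · simp [htim]
  rw [hθ₀, hderivφ]
  push_cast
  rw [htreC, htdef, ha2]
  have hconja2 : (starRingEnd ℂ) (-((starRingEnd ℂ) z₀)) = -z₀ := by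
    simp
  rw [hconja2]
  rw [div_eq_iff (by norm_num : (-1:ℂ) ≠ 0)]
  linear_combination (-1 : ℂ) * hz₀conj
end
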